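/- arXiv:1603.08044 — 4 statements merged into one kernel-verified Lean document; each statement's English description precedes it below -/
import Mathlib

section
/- Assume char F ≠ 2 and let f be a derivation of N. Then there exist: (1) a block upper triangular matrix X (an n×n matrix with X r s = 0 whenever b r > b s); (2) an F-linear map φ : N → N whose image is contained in N^{1t} and which vanishes on every N^{ij} with j > i+1; (3) a derivation φ₁ of N with φ₁(N^{12}) ⊆ N^{2t}, φ₁(N^{ij}) = 0 for every (i,j) ≠ (1,2), and φ₁ = 0 unless block 1 consists of a single index (#{r : b r = 1} = 1); (4) a derivation φ₂ of N with φ₂(N^{t−1,t}) ⊆ N^{1,t−1}, φ₂(N^{ij}) = 0 for every (i,j) ≠ (t−1,t), and φ₂ = 0 unless block t consists of a single index (#{s : b s = t} = 1); such that f(A) = X·A − A·X + φ(A) + φ₁(A) + φ₂(A) for all A ∈ N. -/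
/-- `A` is a strictly block upper triangular matrix relative to the block function `b`
(index `r` lies in block `b r`): `A r s = 0` whenever `b r ≥ b s`. -/
def InN {F : Type*} [Field F] {n : ℕ} (b : Fin n → ℕ)
    (A : Matrix (Fin n) (Fin n) F) : Prop :=
  ∀ r s, b s ≤ b r → A r s = 0

/-- `A` lies in the `(i,j)` block `N^{ij}`: `A r s = 0` unless `b r = i` and `b s = j`. -/
def InBlk {F : Type*} [Field F] {n : ℕ} (b : Fin n → ℕ) (i j : ℕ)
    (A : Matrix (Fin n) (Fin n) F) : Prop :=
  ∀ r s, ¬(b r = i ∧ b s = j) → A r s = 0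

/-- `f` is a derivation of the Lie algebra `N` of strictly block upper triangular matrices:
it maps `N` into `N` and satisfies `f [X,Y] = [f X, Y] + [X, f Y]` on `N`,
where `[X,Y] = XY - YX`. -/
def IsDerN {F : Type*} [Field F] {n : ℕ} (b : Fin n → ℕ)
    (f : Matrix (Fin n) (Fin n) F →ₗ[F] Matrix (Fin n) (Fin n) F) : Prop :=
  (∀ A, InN b A → InN b (f A)) ∧
  ∀ X Y, InN b X → InN b Y →
    f (X * Y - Y * X) = (f X * Y - Y * f X) + (X * f Y - f Y * X)

namespace Stmt15Aux

variable {F : Type*} [Field F] {n : ℕ} (b : Fin n → ℕ)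

/-- elementary matrix -/
def E (r s : Fin n) : Matrix (Fin n) (Fin n) F := Matrix.single r s 1

theorem E_apply (r s p q : Fin n) : (E r s : Matrix (Fin n) (Fin n) F) p q = if p = r ∧ q = s then 1 else 0 := by
  simp [E, Matrix.single, eq_comm, Matrix.of_apply]

theorem E_mem {r s : Fin n} (h : b r < b s) : InN b (E r s : Matrix (Fin n) (Fin n) F) := by
  intro p q hle
  rw [E_apply]
  rcases eq_or_ne p r with rfl|hp
  · rcases eq_or_ne q s with rfl|hq
    · omega
    · simp [hq]
  · simp [hp]

theorem mulE (M : Matrix (Fin n) (Fin n) F) (u v p q : Fin n) :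
    (M * E u v : Matrix (Fin n) (Fin n) F) p q = if q = v then M p u else 0 := by
  rcases eq_or_ne q v with rfl|h
  · rw [if_pos rfl]
    have := Matrix.mul_single_apply_same (c := (1:F)) u q p M
    rw [mul_one] at this
    exact this
  · rw [if_neg h]
    exact Matrix.mul_single_apply_of_ne (c := (1:F)) u v p q h M

theorem Emul (M : Matrix (Fin n) (Fin n) F) (u v p q : Fin n) :
    (E u v * M : Matrix (Fin n) (Fin n) F) p q = if p = u then M v q else 0 := by
  rcases eq_or_ne p u with rfl|h
  · rw [if_pos rfl]
    have := Matrix.single_mul_apply_same (c := (1:F)) p v q M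
    rw [one_mul] at this
    exact this
  · rw [if_neg h]
    exact Matrix.single_mul_apply_of_ne (c := (1:F)) u v p q h M

theorem EE (r s u v : Fin n) :
    (E r s * E u v : Matrix (Fin n) (Fin n) F) = if s = u then E r v else 0 := by
  rcases eq_or_ne s u with rfl|h
  · rw [if_pos rfl]
    have := Matrix.single_mul_single_same (c := (1:F)) r s v (1:F)
    rw [mul_one] at this
    exact this
  · rw [if_neg h]
    exact Matrix.single_mul_single_of_ne (c := (1:F)) r s u h 1


theorem master {F : Type*} [Field F] {n : ℕ} {b : Fin n → ℕ}
    {f : Matrix (Fin n) (Fin n) F →ₗ[F] Matrix (Fin n) (Fin n) F} (hf : IsDerN b f)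
    {r s u v : Fin n} (hrs : b r < b s) (huv : b u < b v) (p q : Fin n) :
    (if s = u then f (E r v) p q else 0) - (if v = r then f (E u s) p q else 0)
    = ((if q = v then f (E r s) p u else 0) - (if p = u then f (E r s) v q else 0))
    + ((if p = r then f (E u v) s q else 0) - (if q = s then f (E u v) p r else 0)) := by
  have h := hf.2 (E r s) (E u v) (E_mem b hrs) (E_mem b huv)
  rw [EE, EE] at h
  have h2 := congrArg (fun M : Matrix (Fin n) (Fin n) F => M p q) h
  simp only [map_sub, apply_ite f, map_zero, Matrix.sub_apply, Matrix.add_apply,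
    mulE, Emul, apply_ite (fun M : Matrix (Fin n) (Fin n) F => M p q),
    Matrix.zero_apply] at h2
  exact h2


section Scalar
variable {F : Type*} [Field F] {n : ℕ} {b : Fin n → ℕ}
  {f : Matrix (Fin n) (Fin n) F →ₗ[F] Matrix (Fin n) (Fin n) F}

theorem neb (b : Fin n → ℕ) {x y : Fin n} (h : b x ≠ b y) : x ≠ y := fun e => h (congrArg b e)

theorem L0 (hf : IsDerN b f) {u v : Fin n} (huv : b u < b v) {p q : Fin n} (h : b q ≤ b p) :
    f (E u v) p q = 0 := hf.1 _ (E_mem b huv) p q h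

theorem L2kill (hf : IsDerN b f) {u v w p q : Fin n} (huv : b u < b v) (hwp : b w < b p)
    (hwu : w ≠ u) (hwv : w ≠ v) (hpu : p ≠ u) (hqv : q ≠ v) : f (E u v) p q = 0 := by
  have h := master hf huv hwp w q
  rw [if_neg (Ne.symm hwv), if_neg hpu, if_pos rfl, if_neg hwu, if_neg hqv,
    L0 hf huv (le_refl (b w)), ite_self] at h
  first
  | linear_combination h
  | linear_combination -h

theorem L1kill (hf : IsDerN b f) {u v x p q : Fin n} (huv : b u < b v) (hqx : b q < b x)
    (hxu : x ≠ u) (hxv : x ≠ v) (hpu : p ≠ u) (hqv : q ≠ v) (hpq : p ≠ q) :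
    f (E u v) p q = 0 := by
  have h := master hf huv hqx p x
  rw [if_neg (Ne.symm hqv), if_neg hxu, if_pos rfl, if_neg hpq, if_neg hpu, if_neg hxv] at h
  first
  | linear_combination h
  | linear_combination -h

theorem crossrel (hf : IsDerN b f) {u s w p : Fin n} (hus : b u < b s) (hwp : b w < b p)
    (hsw : s ≠ w) (hpu : p ≠ u) (hps : p ≠ s) :
    f (E u s) p s = - f (E w p) w u := by
  have h := master hf hus hwp w s
  rw [if_neg hsw, if_neg hpu, if_neg (Ne.symm hps), if_pos rfl, if_pos rfl,
    L0 hf hwp (le_refl (b s)), ite_self] at h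
  first
  | linear_combination h
  | linear_combination -h

theorem symrow (hf : IsDerN b f) {r s v : Fin n} (hrs : b r < b s) (hrv : b r < b v)
    (q : Fin n) : f (E r s) v q = f (E r v) s q := by
  have h := master hf hrs hrv r q
  rw [if_neg (neb b (by omega)), if_neg (neb b (by omega) : v ≠ r), if_pos rfl, if_pos rfl,
    L0 hf hrs (le_refl (b r)), ite_self, L0 hf hrv (le_refl (b r)), ite_self] at h
  first
  | linear_combination h
  | linear_combination -h

theorem symcol (hf : IsDerN b f) {r s u : Fin n} (hrs : b r < b s) (hus : b u < b s)
    (p : Fin n) : f (E r s) p u = f (E u s) p r := by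
  have h := master hf hrs hus p s
  rw [if_neg (neb b (by omega) : s ≠ u), if_neg (neb b (by omega) : s ≠ r), if_pos rfl, if_pos rfl,
    L0 hf hrs (le_refl (b s)), ite_self, L0 hf hus (le_refl (b s)), ite_self] at h
  first
  | linear_combination h
  | linear_combination -h

theorem fact (hf : IsDerN b f) {u m v : Fin n} (hum : b u < b m) (hmv : b m < b v)
    (p q : Fin n) :
    f (E u v) p q = ((if q = v then f (E u m) p m else 0) - (if p = m then f (E u m) v q else 0))
      + ((if p = u then f (E m v) m q else 0) - (if q = m then f (E m v) p u else 0)) := by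
  have h := master hf hum hmv p q
  rw [if_pos rfl, if_neg (neb b (by omega) : v ≠ u)] at h
  first
  | linear_combination h
  | linear_combination -h

theorem chainrow (hf : IsDerN b f) {w u v q : Fin n} (hwu : b w < b u) (huv : b u < b v)
    (hqv : q ≠ v) : f (E w v) w q = f (E u v) u q := by
  have h := master hf hwu huv w q
  rw [if_pos rfl, if_neg (neb b (by omega) : v ≠ w), if_neg hqv, if_neg (neb b (by omega) : w ≠ u),
    if_pos rfl, L0 hf huv (le_refl (b w)), ite_self] at h
  first
  | linear_combination h
  | linear_combination -h

theorem chainrow' (hf : IsDerN b f) {u m v q : Fin n} (hum : b u < b m) (hmv : b m < b v)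
    (hqv : q ≠ v) : f (E u v) u q = f (E m v) m q := by
  have h := fact hf hum hmv u q
  rw [if_neg hqv, if_neg (neb b (by omega) : u ≠ m), if_pos rfl,
    L0 hf hmv (le_refl (b u)), ite_self] at h
  first
  | linear_combination h
  | linear_combination -h

theorem chaincol (hf : IsDerN b f) {u m v p : Fin n} (hum : b u < b m) (hmv : b m < b v)
    (hpu : p ≠ u) : f (E u v) p v = f (E u m) p m := by
  have h := fact hf hum hmv p v
  rw [if_pos rfl, if_neg hpu, if_neg (neb b (by omega) : (v:Fin n) ≠ m),
    L0 hf hum (le_refl (b v)), ite_self] at h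
  first
  | linear_combination h
  | linear_combination -h

theorem rowlemma (hf : IsDerN b f) {u v q x : Fin n} (huv : b u < b v) (huq : b u < b q)
    (hqv : q ≠ v) (hqx : b q < b x) : f (E u v) u q = - f (E q x) v x := by
  have h := master hf huv hqx u x
  rw [if_neg (Ne.symm hqv), if_neg (neb b (by omega) : x ≠ u), if_pos rfl,
    if_neg (neb b (by omega) : u ≠ q), if_pos rfl, L0 hf hqx (le_refl (b u)), ite_self] at h
  first
  | linear_combination h
  | linear_combination -h

theorem cocycle (hf : IsDerN b f) {u m v : Fin n} (hum : b u < b m) (hmv : b m < b v) :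
    f (E u v) u v = f (E u m) u m + f (E m v) m v := by
  have h := fact hf hum hmv u v
  rw [if_pos rfl, if_neg (neb b (by omega) : u ≠ m), if_pos rfl,
    if_neg (neb b (by omega) : v ≠ m)] at h
  first
  | linear_combination h
  | linear_combination -h

theorem V1upper (hf : IsDerN b f) {u s w p : Fin n} (hus : b u < b s) (hwp : b w < b p)
    (huw : b u ≤ b w) (hsw : s ≠ w) (hpu : p ≠ u) (hps : p ≠ s) : f (E u s) p s = 0 := by
  rw [crossrel hf hus hwp hsw hpu hps, L0 hf hwp huw, neg_zero]

end Scalar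


section Constr
variable {F : Type*} [Field F] {n : ℕ}

/-- the inner matrix X -/
def XX (b : Fin n → ℕ) (f : Matrix (Fin n) (Fin n) F →ₗ[F] Matrix (Fin n) (Fin n) F)
    (z : ℕ → Fin n) (t : ℕ) : Matrix (Fin n) (Fin n) F :=
  Matrix.of fun a d => if b d < t then f (E d (z t)) a (z t)
    else if a = d then f (E (z 1) (z t)) (z 1) (z t) - f (E (z 1) d) (z 1) d
    else -(f (E (z 1) a) (z 1) d)

theorem XXapp (b : Fin n → ℕ) (f : Matrix (Fin n) (Fin n) F →ₗ[F] Matrix (Fin n) (Fin n) F)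
    (z : ℕ → Fin n) (t : ℕ) (a d : Fin n) :
    XX b f z t a d = if b d < t then f (E d (z t)) a (z t)
    else if a = d then f (E (z 1) (z t)) (z 1) (z t) - f (E (z 1) d) (z 1) d
    else -(f (E (z 1) a) (z 1) d) := rfl

/-- the exceptional map kernel for block (1,2) -/
def K1 (b : Fin n → ℕ) (f : Matrix (Fin n) (Fin n) F →ₗ[F] Matrix (Fin n) (Fin n) F)
    (t : ℕ) (r s : Fin n) : Matrix (Fin n) (Fin n) F :=
  Matrix.of fun p q => if b r = 1 ∧ b s = 2 ∧ b p = 2 ∧ b q = t ∧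
      (Finset.univ.filter fun x => b x = 1).card = 1 then f (E r s) p q else 0

theorem K1app (b : Fin n → ℕ) (f : Matrix (Fin n) (Fin n) F →ₗ[F] Matrix (Fin n) (Fin n) F)
    (t : ℕ) (r s p q : Fin n) :
    K1 b f t r s p q = if b r = 1 ∧ b s = 2 ∧ b p = 2 ∧ b q = t ∧
      (Finset.univ.filter fun x => b x = 1).card = 1 then f (E r s) p q else 0 := rfl

/-- the exceptional map kernel for block (t-1,t) -/
def K2 (b : Fin n → ℕ) (f : Matrix (Fin n) (Fin n) F →ₗ[F] Matrix (Fin n) (Fin n) F)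
    (t : ℕ) (r s : Fin n) : Matrix (Fin n) (Fin n) F :=
  Matrix.of fun p q => if b r = t - 1 ∧ b s = t ∧ b p = 1 ∧ b q = t - 1 ∧
      (Finset.univ.filter fun x => b x = t).card = 1 then f (E r s) p q else 0

theorem K2app (b : Fin n → ℕ) (f : Matrix (Fin n) (Fin n) F →ₗ[F] Matrix (Fin n) (Fin n) F)
    (t : ℕ) (r s p q : Fin n) :
    K2 b f t r s p q = if b r = t - 1 ∧ b s = t ∧ b p = 1 ∧ b q = t - 1 ∧
      (Finset.univ.filter fun x => b x = t).card = 1 then f (E r s) p q else 0 := rfl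

theorem cardone {P : Fin n → Prop} [DecidablePred P] {s : Fin n} (hs : P s)
    (hu : ∀ x, P x → x = s) : (Finset.univ.filter fun x => P x).card = 1 := by
  rw [Finset.card_eq_one]
  refine ⟨s, ?_⟩
  ext x
  simp only [Finset.mem_filter, Finset.mem_univ, true_and, Finset.mem_singleton]
  exact ⟨fun h => hu x h, fun h => h ▸ hs⟩

variable {b : Fin n → ℕ} {t : ℕ}
  {f : Matrix (Fin n) (Fin n) F →ₗ[F] Matrix (Fin n) (Fin n) F} {z : ℕ → Fin n}

theorem Xupper (hf : IsDerN b f) (ht : 3 ≤ t) (hub : ∀ x, b x ≤ t)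
    (hz : ∀ k, 1 ≤ k → k ≤ t → b (z k) = k) {a d : Fin n} (h : b d < b a) :
    XX b f z t a d = 0 := by
  have hzt : b (z t) = t := hz t (by omega) le_rfl
  have hda : b d < t := by have := hub a; omega
  rw [XXapp, if_pos hda]
  rcases eq_or_lt_of_le (hub a) with hat|hat
  · exact L0 hf (by omega) (by omega)
  · exact V1upper hf (by omega) (h : b d < b a) le_rfl (neb b (by omega)) (neb b (by omega))
      (neb b (by omega))

/-- the diagonal case -/
theorem maindiag (hf : IsDerN b f) (ht : 3 ≤ t) (hub : ∀ x, b x ≤ t) (hlb : ∀ x, 1 ≤ b x)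
    (hz : ∀ k, 1 ≤ k → k ≤ t → b (z k) = k) {r s : Fin n} (hrs : b r < b s) :
    f (E r s) r s = XX b f z t r r - XX b f z t s s := by
  have hzt : b (z t) = t := hz t (by omega) le_rfl
  have hz1 : b (z 1) = 1 := hz 1 le_rfl (by omega)
  have hst : b s ≤ t := hub s
  have hr1 : 1 ≤ b r := hlb r
  have hXr : XX b f z t r r = f (E r (z t)) r (z t) := by
    rw [XXapp, if_pos (by omega)]
  rcases eq_or_lt_of_le hst with hst'|hst'
  · -- b s = t
    have hXs : XX b f z t s s = f (E (z 1) (z t)) (z 1) (z t) - f (E (z 1) s) (z 1) s := by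
      rw [XXapp, if_neg (by omega), if_pos rfl]
    rw [hXr, hXs]
    rcases eq_or_lt_of_le hr1 with hr1'|hr1'
    · -- b r = 1, use middle z 2
      have hz2 : b (z 2) = 2 := hz 2 (by omega) (by omega)
      have e1 := cocycle hf (show b r < b (z 2) by omega) (show b (z 2) < b s by omega)
      have e2 := cocycle hf (show b r < b (z 2) by omega) (show b (z 2) < b (z t) by omega)
      have e3 := cocycle hf (show b (z 1) < b (z 2) by omega) (show b (z 2) < b s by omega)
      have e4 := cocycle hf (show b (z 1) < b (z 2) by omega) (show b (z 2) < b (z t) by omega)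
      linear_combination e1 - e2 + e4 - e3
    · -- 2 ≤ b r
      have e1 := cocycle hf (show b (z 1) < b r by omega) hrs
      have e2 := cocycle hf (show b (z 1) < b r by omega) (show b r < b (z t) by omega)
      linear_combination e2 - e1
  · -- b s < t
    have hXs : XX b f z t s s = f (E s (z t)) s (z t) := by
      rw [XXapp, if_pos (by omega)]
    rw [hXr, hXs]
    have e1 := cocycle hf hrs (show b s < b (z t) by omega)
    linear_combination -e1

/-- row entries: `f (E r s) r q = - X s q` away from the free zone -/
theorem rowX (hf : IsDerN b f) (ht : 3 ≤ t) (hub : ∀ x, b x ≤ t) (hlb : ∀ x, 1 ≤ b x)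
    (hz : ∀ k, 1 ≤ k → k ≤ t → b (z k) = k) {r s q : Fin n} (hrs : b r < b s) (hqs : q ≠ s)
    (hcond : b q = t → 2 ≤ b r ∨ 3 ≤ b s) :
    f (E r s) r q = -(XX b f z t s q) := by
  have hzt : b (z t) = t := hz t (by omega) le_rfl
  have hz1 : b (z 1) = 1 := hz 1 le_rfl (by omega)
  rcases lt_or_ge (b q) t with hq|hq
  · -- b q < t
    rw [XXapp, if_pos hq]
    rcases lt_or_ge (b r) (b q) with hrq|hrq
    · exact rowlemma hf hrs hrq hqs (show b q < b (z t) by omega)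
    · rw [L0 hf hrs hrq]
      rcases lt_or_ge (b s) t with hsl|hsl
      · rw [V1upper hf (show b q < b (z t) by omega) (show b q < b s by omega) le_rfl
          (neb b (by omega)) (neb b (by omega)) (neb b (by omega)), neg_zero]
      · rw [L0 hf (show b q < b (z t) by omega) (show b (z t) ≤ b s by omega), neg_zero]
  · -- b q = t
    have hqt : b q = t := le_antisymm (hub q) hq
    have hsq : s ≠ q := by
      intro e; exact hqs e.symm
    rw [XXapp, if_neg (by omega), if_neg hsq, neg_neg]
    rcases hcond hqt with hr2|hs3
    · exact (chainrow hf (show b (z 1) < b r by omega) hrs hqs).symm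
    · have hz2 : b (z 2) = 2 := hz 2 (by omega) (by omega)
      have hr1 : 1 ≤ b r := hlb r
      rcases lt_or_ge (b r) 2 with hr|hr
      · -- b r = 1
        have e1 := chainrow' hf (show b r < b (z 2) by omega) (show b (z 2) < b s by omega) hqs
        have e2 := chainrow hf (show b (z 1) < b (z 2) by omega) (show b (z 2) < b s by omega) hqs
        rw [e1, ← e2]
      · exact (chainrow hf (show b (z 1) < b r by omega) hrs hqs).symm

/-- column entries: `f (E r s) p s = X p r` away from the free zone -/
theorem colX (hf : IsDerN b f) (ht : 3 ≤ t) (hub : ∀ x, b x ≤ t) (hlb : ∀ x, 1 ≤ b x)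
    (hz : ∀ k, 1 ≤ k → k ≤ t → b (z k) = k) {r s p : Fin n} (hrs : b r < b s) (hpr : p ≠ r)
    (hcond : b s = t → b r ≤ t - 2 ∨ 2 ≤ b p) :
    f (E r s) p s = XX b f z t p r := by
  have hzt : b (z t) = t := hz t (by omega) le_rfl
  have hz1 : b (z 1) = 1 := hz 1 le_rfl (by omega)
  have hrt : b r < t := by have := hub s; omega
  rw [XXapp, if_pos hrt]
  rcases lt_or_ge (b s) t with hsl|hsl
  · exact (chaincol hf hrs (show b s < b (z t) by omega) hpr).symm
  · have hst : b s = t := le_antisymm (hub s) hsl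
    by_cases hszt : s = z t
    · rw [hszt]
    · rcases hcond hst with hr2|hp2
      · have hm : b (z (t-1)) = t - 1 := hz (t-1) (by omega) (by omega)
        have e1 := chaincol hf (show b r < b (z (t-1)) by omega)
          (show b (z (t-1)) < b s by omega) hpr
        have e2 := chaincol hf (show b r < b (z (t-1)) by omega)
          (show b (z (t-1)) < b (z t) by omega) hpr
        rw [e1, ← e2]
      · -- 2 ≤ b p ; possibly b r = t - 1
        rcases lt_or_ge (b p) (b s) with hps|hps
        · have e1 := crossrel hf hrs (show b (z 1) < b p by omega) (neb b (by omega)) hpr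
            (neb b (by omega))
          have e2 := crossrel hf (show b r < b (z t) by omega) (show b (z 1) < b p by omega)
            (neb b (by omega)) hpr (neb b (by omega))
          rw [e1, ← e2]
        · rw [L0 hf hrs hps, L0 hf (show b r < b (z t) by omega) (by omega)]

end Constr


section Main
variable {F : Type*} [Field F] {n : ℕ} {b : Fin n → ℕ} {t : ℕ}
  {f : Matrix (Fin n) (Fin n) F →ₗ[F] Matrix (Fin n) (Fin n) F} {z : ℕ → Fin n}

theorem mainentry (hf : IsDerN b f) (ht : 3 ≤ t) (hub : ∀ x, b x ≤ t) (hlb : ∀ x, 1 ≤ b x)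
    (hz : ∀ k, 1 ≤ k → k ≤ t → b (z k) = k) (h2 : (2:F) ≠ 0)
    {r s : Fin n} (hrs : b r < b s) (p q : Fin n) (hng : ¬(b p = 1 ∧ b q = t)) :
    f (E r s) p q = ((if q = s then XX b f z t p r else 0)
        - (if p = r then XX b f z t s q else 0))
      + K1 b f t r s p q + K2 b f t r s p q := by
  have hzt : b (z t) = t := hz t (by omega) le_rfl
  have hz1 : b (z 1) = 1 := hz 1 le_rfl (by omega)
  have hqt : b q ≤ t := hub q
  have hstt : b s ≤ t := hub s
  have hr1 : 1 ≤ b r := hlb r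
  have hp1 : 1 ≤ b p := hlb p
  have hq1 : 1 ≤ b q := hlb q
  by_cases hpr : p = r
  · subst hpr
    by_cases hqs : q = s
    · subst hqs
      rw [if_pos rfl, if_pos rfl, K1app, if_neg (by rintro ⟨h1, _, h3, _⟩; omega),
        K2app, if_neg (by rintro ⟨h1, _, h3, _⟩; omega),
        maindiag hf ht hub hlb hz hrs]
      ring
    · rw [if_neg hqs, if_pos rfl, K1app, if_neg (by rintro ⟨h1, _, h3, _⟩; omega),
        K2app, if_neg (by rintro ⟨h1, _, h3, _⟩; omega),
        rowX hf ht hub hlb hz hrs hqs (fun hq => by left; omega)]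
      ring
  · by_cases hqs : q = s
    · subst hqs
      rw [if_pos rfl, if_neg hpr, K1app, if_neg (by rintro ⟨_, h2', h3, h4, _⟩; omega),
        K2app, if_neg (by rintro ⟨_, h2', h3, h4, _⟩; omega),
        colX hf ht hub hlb hz hrs hpr (fun hs => by right; omega)]
      ring
    · rw [if_neg hqs, if_neg hpr]
      by_cases hg1 : b r = 1 ∧ b s = 2 ∧ b p = 2 ∧ b q = t ∧
          (Finset.univ.filter fun x => b x = 1).card = 1
      · rw [K1app, if_pos hg1, K2app, if_neg (by rintro ⟨h1', h2', _⟩; omega)]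
        ring
      by_cases hg2 : b r = t - 1 ∧ b s = t ∧ b p = 1 ∧ b q = t - 1 ∧
          (Finset.univ.filter fun x => b x = t).card = 1
      · rw [K2app, if_pos hg2, K1app, if_neg (by rintro ⟨h1', h2', _⟩; omega)]
        ring
      rw [K1app, if_neg hg1, K2app, if_neg hg2]
      have main : f (E r s) p q = 0 := by
        rcases le_or_gt (b q) (b p) with hle|hpq
        · exact L0 hf hrs hle
        by_cases hEw : ∃ w, b w < b p ∧ w ≠ r ∧ w ≠ s
        · obtain ⟨w, hw1, hw2, hw3⟩ := hEw
          exact L2kill hf hrs hw1 hw2 hw3 hpr hqs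
        push_neg at hEw
        by_cases hEx : ∃ x, b q < b x ∧ x ≠ r ∧ x ≠ s
        · obtain ⟨x, hx1, hx2, hx3⟩ := hEx
          exact L1kill hf hrs hx1 hx2 hx3 hpr hqs (neb b (by omega))
        push_neg at hEx
        have hrowfact : ∀ k, 1 ≤ k → k ≤ t → k < b p → b r = k ∨ b s = k := by
          intro k hk1 hk2 hk3
          have hzk : b (z k) = k := hz k hk1 hk2
          rcases eq_or_ne (z k) r with h|h
          · left; rw [← h, hzk]
          · right; rw [← hEw (z k) (by omega) h, hzk]
        have hcolfact : ∀ k, 1 ≤ k → k ≤ t → b q < k → b r = k ∨ b s = k := by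
          intro k hk1 hk2 hk3
          have hzk : b (z k) = k := hz k hk1 hk2
          rcases eq_or_ne (z k) r with h|h
          · left; rw [← h, hzk]
          · right; rw [← hEx (z k) (by omega) h, hzk]
        have hrowcase : b p = 1 ∨ (b p = 2 ∧ b r = 1) ∨ (b p = 3 ∧ b r = 1 ∧ b s = 2) := by
          rcases Nat.lt_or_ge (b p) 2 with h|h
          · left; omega
          rcases Nat.lt_or_ge (b p) 3 with h'|h'
          · have h1 := hrowfact 1 le_rfl (by omega) (by omega)
            right; left; omega
          rcases Nat.lt_or_ge (b p) 4 with h''|h''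
          · have h1 := hrowfact 1 le_rfl (by omega) (by omega)
            have hh2 := hrowfact 2 (by omega) (by omega) (by omega)
            right; right; omega
          · exfalso
            have h1 := hrowfact 1 le_rfl (by omega) (by omega)
            have hh2 := hrowfact 2 (by omega) (by omega) (by omega)
            have hh3 := hrowfact 3 (by omega) (by omega) (by omega)
            omega
        have hcolcase : b q = t ∨ (b q = t - 1 ∧ b s = t) ∨
            (b q = t - 2 ∧ b s = t ∧ b r = t - 1) := by
          rcases Nat.lt_or_ge (t - 1) (b q) with h|h
          · left; omega
          rcases Nat.lt_or_ge (t - 2) (b q) with h'|h'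
          · have h1 := hcolfact t (by omega) le_rfl (by omega)
            right; left; omega
          rcases Nat.lt_or_ge (t - 3) (b q) with h''|h''
          · have h1 := hcolfact t (by omega) le_rfl (by omega)
            have hh2 := hcolfact (t-1) (by omega) (by omega) (by omega)
            right; right; omega
          · exfalso
            have h1 := hcolfact t (by omega) le_rfl (by omega)
            have hh2 := hcolfact (t-1) (by omega) (by omega) (by omega)
            have hh3 := hcolfact (t-2) (by omega) (by omega) (by omega)
            omega
        rcases hrowcase with hp1'|⟨hp2, hr1'⟩|⟨hp3, hr1', hs2⟩ <;>
          rcases hcolcase with hqt'|⟨hq1', hstop⟩|⟨hq2', hstop, hrt1⟩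
        · -- (1,t): excluded by hng
          exact absurd ⟨hp1', hqt'⟩ hng
        · -- (1, t-1): the φ₂ escape zone, here b r ≠ t-1
          have huniqt : ∀ x, b x = t → x = s := by
            intro x hx
            rcases eq_or_ne x r with h|h
            · exfalso; rw [h] at hx; omega
            · exact hEx x (by omega) h
          have hcardt : (Finset.univ.filter fun x => b x = t).card = 1 :=
            cardone hstop huniqt
          have hrne : b r ≠ t - 1 := fun h => hg2 ⟨h, hstop, hp1', hq1', hcardt⟩
          have hm : b (z (t-1)) = t - 1 := hz _ (by omega) (by omega)
          have hfac := fact hf (show b r < b (z (t-1)) by omega)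
            (show b (z (t-1)) < b s by omega) p q
          rw [if_neg hqs, if_neg (neb b (by omega) : p ≠ z (t-1)), if_neg hpr] at hfac
          by_cases hqm : q = z (t-1)
          · rw [if_pos hqm] at hfac
            have hkey : f (E (z (t-1)) s) p r = 0 := by
              rcases Nat.lt_or_ge (b r) (t-2) with hr3|hr3
              · have hx : b (z (b r + 1)) = b r + 1 := hz _ (by omega) (by omega)
                exact L1kill hf (show b (z (t-1)) < b s by omega)
                  (show b r < b (z (b r + 1)) by omega) (neb b (by omega)) (neb b (by omega))
                  (neb b (by omega)) (neb b (by omega)) hpr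
              · have hr3' : b r = t - 2 := by omega
                by_cases hex : ∃ x, b x = t - 1 ∧ x ≠ z (t-1)
                · obtain ⟨x, hx1, hx2⟩ := hex
                  exact L1kill hf (show b (z (t-1)) < b s by omega)
                    (show b r < b x by omega) hx2 (neb b (by omega))
                    (neb b (by omega)) (neb b (by omega)) hpr
                · push_neg at hex
                  have e1 : f (E (z (t-1)) s) p r = f (E r s) p (z (t-1)) :=
                    symcol hf (show b (z (t-1)) < b s by omega) hrs p
                  rw [hqm] at hfac
                  have h2x : 2 * f (E (z (t-1)) s) p r = 0 := by
                    first
                    | linear_combination e1 + hfac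
                    | linear_combination e1 - hfac
                    | linear_combination -e1 + hfac
                    | linear_combination -e1 - hfac
                  exact (mul_eq_zero.mp h2x).resolve_left h2
            rw [hkey] at hfac
            linear_combination hfac
          · rw [if_neg hqm] at hfac
            linear_combination hfac
        · -- (1, t-2)
          have e1 : f (E r s) p q = f (E q s) p r := symcol hf hrs (by omega) p
          have e2 := fact hf (show b q < b r by omega) (show b r < b s by omega) p r
          rw [if_neg (neb b (by omega) : r ≠ s), if_neg hpr,
            if_neg (neb b (by omega) : p ≠ q), if_pos rfl] at e2
          have h2x : 2 * f (E r s) p q = 0 := by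
            first
            | linear_combination e1 + e2
            | linear_combination e1 - e2
            | linear_combination -e1 + e2
            | linear_combination -e1 - e2
          exact (mul_eq_zero.mp h2x).resolve_left h2
        · -- (2, t)
          have huniq1 : ∀ w, b w = 1 → w = r := by
            intro w hw
            rcases eq_or_ne w r with h|h
            · exact h
            · have := hEw w (by omega) h
              rw [this] at hw; omega
          have hcard1 : (Finset.univ.filter fun x => b x = 1).card = 1 :=
            cardone hr1' huniq1
          have hs3 : 3 ≤ b s := by
            rcases Nat.lt_or_ge (b s) 3 with h|h
            · exact absurd ⟨hr1', by omega, hp2, hqt', hcard1⟩ hg1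
            · exact h
          have hm : b (z 2) = 2 := hz 2 (by omega) (by omega)
          have hfac := fact hf (show b r < b (z 2) by omega) (show b (z 2) < b s by omega) p q
          rw [if_neg hqs, if_neg (neb b (by omega) : p ≠ r),
            if_neg (neb b (by omega) : q ≠ z 2)] at hfac
          by_cases hpm : p = z 2
          · rw [if_pos hpm] at hfac
            have hkey : f (E r (z 2)) s q = 0 := by
              rcases Nat.lt_or_ge (b s) 4 with h4|h4
              · have e1 := symrow hf hrs (show b r < b (z 2) by omega) q
                rw [hpm] at hfac
                have h2x : 2 * f (E r (z 2)) s q = 0 := by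
                  first
                  | linear_combination e1 + hfac
                  | linear_combination e1 - hfac
                  | linear_combination -e1 + hfac
                  | linear_combination -e1 - hfac
                exact (mul_eq_zero.mp h2x).resolve_left h2
              · have h3 : b (z 3) = 3 := hz 3 (by omega) (by omega)
                exact L2kill hf (show b r < b (z 2) by omega) (show b (z 3) < b s by omega)
                  (neb b (by omega)) (neb b (by omega)) (neb b (by omega))
                  (neb b (by omega))
            rw [hkey] at hfac
            linear_combination hfac
          · rw [if_neg hpm] at hfac
            linear_combination hfac
        · -- (2, t-1)
          have hm : b (z 2) = 2 := hz 2 (by omega) (by omega)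
          have hfac := fact hf (show b r < b (z 2) by omega) (show b (z 2) < b s by omega) p q
          rw [if_neg hqs, if_neg (neb b (by omega) : p ≠ r),
            if_neg (neb b (by omega) : q ≠ z 2),
            L0 hf (show b r < b (z 2) by omega) (show b q ≤ b s by omega), ite_self] at hfac
          linear_combination hfac
        · -- (2, t-2): contradiction
          omega
        · -- (3, t)
          have e1 := symrow hf hrs (show b r < b p by omega) q
          have e2 := fact hf hrs (show b s < b p by omega) s q
          rw [if_neg (neb b (by omega) : q ≠ p), if_pos rfl,
            if_neg (neb b (by omega) : s ≠ r), if_neg hqs] at e2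
          have h2x : 2 * f (E r s) p q = 0 := by
            first
            | linear_combination e1 + e2
            | linear_combination e1 - e2
            | linear_combination -e1 + e2
            | linear_combination -e1 - e2
          exact (mul_eq_zero.mp h2x).resolve_left h2
        · -- (3, t-1): contradiction
          omega
        · -- (3, t-2): contradiction
          omega
      rw [main]
      ring

theorem mainnonadj (hf : IsDerN b f) (ht : 3 ≤ t) (hub : ∀ x, b x ≤ t) (hlb : ∀ x, 1 ≤ b x)
    (hz : ∀ k, 1 ≤ k → k ≤ t → b (z k) = k) (h2 : (2:F) ≠ 0)
    {r s : Fin n} (hrs : b r < b s) (hadj : b r + 1 < b s) (p q : Fin n) :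
    f (E r s) p q = ((if q = s then XX b f z t p r else 0)
        - (if p = r then XX b f z t s q else 0))
      + K1 b f t r s p q + K2 b f t r s p q := by
  have hzt : b (z t) = t := hz t (by omega) le_rfl
  have hz1 : b (z 1) = 1 := hz 1 le_rfl (by omega)
  have hstt : b s ≤ t := hub s
  have hr1 : 1 ≤ b r := hlb r
  by_cases hng : b p = 1 ∧ b q = t
  · obtain ⟨hp1, hqt⟩ := hng
    have hk1 : ¬(b r = 1 ∧ b s = 2 ∧ b p = 2 ∧ b q = t ∧
        (Finset.univ.filter fun x => b x = 1).card = 1) := by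
      rintro ⟨h1', h2', _⟩; omega
    have hk2 : ¬(b r = t - 1 ∧ b s = t ∧ b p = 1 ∧ b q = t - 1 ∧
        (Finset.univ.filter fun x => b x = t).card = 1) := by
      rintro ⟨h1', h2', _⟩; omega
    rw [K1app, if_neg hk1, K2app, if_neg hk2]
    by_cases hpr : p = r
    · subst hpr
      by_cases hqs : q = s
      · subst hqs
        rw [if_pos rfl, if_pos rfl, maindiag hf ht hub hlb hz hrs]
        ring
      · rw [if_neg hqs, if_pos rfl, rowX hf ht hub hlb hz hrs hqs (fun _ => Or.inr (by omega))]
        ring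
    · by_cases hqs : q = s
      · subst hqs
        rw [if_pos rfl, if_neg hpr,
          colX hf ht hub hlb hz hrs hpr (fun h => Or.inl (by omega))]
        ring
      · rw [if_neg hqs, if_neg hpr]
        have hm : b (z (b r + 1)) = b r + 1 := hz _ (by omega) (by omega)
        have hfac := fact hf (show b r < b (z (b r + 1)) by omega)
          (show b (z (b r + 1)) < b s by omega) p q
        rw [if_neg hqs, if_neg (neb b (by omega) : p ≠ z (b r + 1)), if_neg hpr,
          if_neg (neb b (by omega) : q ≠ z (b r + 1))] at hfac
        linear_combination hfac
  · exact mainentry hf ht hub hlb hz h2 hrs p q hng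

end Main


section Phi
variable {F : Type*} [Field F] {n : ℕ}

/-- entry extraction as a linear map -/
def eLM (r s : Fin n) : Matrix (Fin n) (Fin n) F →ₗ[F] F where
  toFun A := A r s
  map_add' _ _ := rfl
  map_smul' _ _ := rfl

/-- linear map built from a matrix kernel -/
noncomputable def PhiK (K : Fin n → Fin n → Matrix (Fin n) (Fin n) F) :
    Matrix (Fin n) (Fin n) F →ₗ[F] Matrix (Fin n) (Fin n) F :=
  ∑ rs : Fin n × Fin n, (eLM rs.1 rs.2).smulRight (K rs.1 rs.2)

theorem PhiK_apply (K : Fin n → Fin n → Matrix (Fin n) (Fin n) F)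
    (A : Matrix (Fin n) (Fin n) F) :
    PhiK K A = ∑ rs : Fin n × Fin n, A rs.1 rs.2 • K rs.1 rs.2 := by
  simp [PhiK, LinearMap.sum_apply, LinearMap.smulRight_apply, eLM, LinearMap.coe_mk,
    AddHom.coe_mk]
  rfl

theorem PhiK_entry (K : Fin n → Fin n → Matrix (Fin n) (Fin n) F)
    (A : Matrix (Fin n) (Fin n) F) (p q : Fin n) :
    PhiK K A p q = ∑ a : Fin n, ∑ c : Fin n, A a c * K a c p q := by
  rw [PhiK_apply, Matrix.sum_apply, Fintype.sum_prod_type]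
  exact Finset.sum_congr rfl fun a _ => Finset.sum_congr rfl fun c _ => by
    rw [Matrix.smul_apply, smul_eq_mul]

theorem matdecomp (A : Matrix (Fin n) (Fin n) F) :
    A = ∑ rs : Fin n × Fin n, A rs.1 rs.2 • (E rs.1 rs.2 : Matrix (Fin n) (Fin n) F) := by
  ext p q
  rw [Matrix.sum_apply, Finset.sum_eq_single (p, q)]
  · rw [Matrix.smul_apply, smul_eq_mul, E_apply, if_pos ⟨rfl, rfl⟩, mul_one]
  · intro rs _ hne
    rw [Matrix.smul_apply, smul_eq_mul, E_apply, if_neg, mul_zero]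
    rintro ⟨h1, h2⟩
    exact hne (Prod.ext h1.symm h2.symm)
  · intro h
    exact absurd (Finset.mem_univ _) h

theorem gdecomp (g : Matrix (Fin n) (Fin n) F →ₗ[F] Matrix (Fin n) (Fin n) F)
    (A : Matrix (Fin n) (Fin n) F) :
    g A = ∑ rs : Fin n × Fin n, A rs.1 rs.2 • g (E rs.1 rs.2) := by
  conv_lhs => rw [matdecomp A]
  rw [map_sum]
  exact Finset.sum_congr rfl fun rs _ => by rw [map_smul]

theorem PhiK_E (K : Fin n → Fin n → Matrix (Fin n) (Fin n) F) (r s : Fin n) :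
    PhiK K (E r s) = K r s := by
  rw [PhiK_apply, Finset.sum_eq_single (r, s)]
  · rw [E_apply, if_pos ⟨rfl, rfl⟩, one_smul]
  · intro rs _ hne
    rw [E_apply, if_neg, zero_smul]
    rintro ⟨h1, h2⟩
    exact hne (Prod.ext h1 h2)
  · intro h
    exact absurd (Finset.mem_univ _) h

variable {b : Fin n → ℕ} {t : ℕ}
  {f : Matrix (Fin n) (Fin n) F →ₗ[F] Matrix (Fin n) (Fin n) F}

theorem uniqblk {k : ℕ} (hc : (Finset.univ.filter fun x => b x = k).card = 1)
    {x y : Fin n} (hx : b x = k) (hy : b y = k) : x = y :=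
  Finset.card_le_one.mp (le_of_eq hc) x (by simp [hx]) y (by simp [hy])

theorem K1_zone {r s p q : Fin n} (h : ¬(b p = 2 ∧ b q = t)) : K1 b f t r s p q = 0 := by
  rw [K1app]
  exact if_neg (by rintro ⟨_, _, h3, h4, _⟩; exact h ⟨h3, h4⟩)

theorem K1_src {r s p q : Fin n} (h : ¬(b r = 1 ∧ b s = 2)) : K1 b f t r s p q = 0 := by
  rw [K1app]
  exact if_neg (by rintro ⟨h1, h2, _⟩; exact h ⟨h1, h2⟩)

theorem K1_card (h : (Finset.univ.filter fun x => b x = 1).card ≠ 1) (r s p q : Fin n) :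
    K1 b f t r s p q = 0 := by
  rw [K1app]
  exact if_neg (by rintro ⟨_, _, _, _, h5⟩; exact h h5)

theorem K2_zone {r s p q : Fin n} (h : ¬(b p = 1 ∧ b q = t - 1)) : K2 b f t r s p q = 0 := by
  rw [K2app]
  exact if_neg (by rintro ⟨_, _, h3, h4, _⟩; exact h ⟨h3, h4⟩)

theorem K2_src {r s p q : Fin n} (h : ¬(b r = t - 1 ∧ b s = t)) : K2 b f t r s p q = 0 := by
  rw [K2app]
  exact if_neg (by rintro ⟨h1, h2, _⟩; exact h ⟨h1, h2⟩)

theorem K2_card (h : (Finset.univ.filter fun x => b x = t).card ≠ 1) (r s p q : Fin n) :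
    K2 b f t r s p q = 0 := by
  rw [K2app]
  exact if_neg (by rintro ⟨_, _, _, _, h5⟩; exact h h5)

theorem PhiK_zone1 {A : Matrix (Fin n) (Fin n) F} {p q : Fin n} (h : ¬(b p = 2 ∧ b q = t)) :
    PhiK (K1 b f t) A p q = 0 := by
  rw [PhiK_entry]
  exact Finset.sum_eq_zero fun a _ => Finset.sum_eq_zero fun c _ => by
    rw [K1_zone h, mul_zero]

theorem PhiK_zone2 {A : Matrix (Fin n) (Fin n) F} {p q : Fin n} (h : ¬(b p = 1 ∧ b q = t - 1)) :
    PhiK (K2 b f t) A p q = 0 := by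
  rw [PhiK_entry]
  exact Finset.sum_eq_zero fun a _ => Finset.sum_eq_zero fun c _ => by
    rw [K2_zone h, mul_zero]

theorem symphi1 (hf : IsDerN b f) (hlb : ∀ x, 1 ≤ b x)
    {X Y : Matrix (Fin n) (Fin n) F} (hX : InN b X) (hY : InN b Y) (p q : Fin n) :
    (Y * PhiK (K1 b f t) X) p q = (X * PhiK (K1 b f t) Y) p q := by
  by_cases hcard : (Finset.univ.filter fun x => b x = 1).card = 1
  swap
  · rw [Matrix.mul_apply, Matrix.mul_apply]
    rw [Finset.sum_eq_zero fun k _ => by rw [PhiK_entry,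
        Finset.sum_eq_zero fun a _ => Finset.sum_eq_zero fun c _ => by
          rw [K1_card hcard, mul_zero], mul_zero],
      Finset.sum_eq_zero fun k _ => by rw [PhiK_entry,
        Finset.sum_eq_zero fun a _ => Finset.sum_eq_zero fun c _ => by
          rw [K1_card hcard, mul_zero], mul_zero]]
  by_cases hq : b q = t
  swap
  · rw [Matrix.mul_apply, Matrix.mul_apply]
    rw [Finset.sum_eq_zero fun k _ => by
        rw [PhiK_zone1 (fun hc => hq hc.2), mul_zero],
      Finset.sum_eq_zero fun k _ => by
        rw [PhiK_zone1 (fun hc => hq hc.2), mul_zero]]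
  by_cases hp : b p = 1
  swap
  · rw [Matrix.mul_apply, Matrix.mul_apply]
    refine Eq.trans (Finset.sum_eq_zero fun k _ => ?_) (Finset.sum_eq_zero fun k _ => ?_).symm
    · by_cases hk : b k = 2
      · rw [hY p k (show b k ≤ b p by have := hlb p; omega), zero_mul]
      · rw [PhiK_zone1 (fun hc => hk hc.1), mul_zero]
    · by_cases hk : b k = 2
      · rw [hX p k (show b k ≤ b p by have := hlb p; omega), zero_mul]
      · rw [PhiK_zone1 (fun hc => hk hc.1), mul_zero]
  · -- main case
    have hker : ∀ k c : Fin n, (K1 b f t p c : Matrix (Fin n) (Fin n) F) k q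
        = K1 b f t p k c q := by
      intro k c
      rw [K1app, K1app]
      by_cases h1 : b c = 2 <;> by_cases h2 : b k = 2
      · rw [if_pos ⟨hp, h1, h2, hq, hcard⟩, if_pos ⟨hp, h2, h1, hq, hcard⟩]
        exact symrow hf (by omega) (by omega) q
      · rw [if_neg (by rintro ⟨_, _, hx, _⟩; exact h2 hx),
          if_neg (by rintro ⟨_, hx, _⟩; exact h2 hx)]
      · rw [if_neg (by rintro ⟨_, hx, _⟩; exact h1 hx),
          if_neg (by rintro ⟨_, _, hx, _⟩; exact h1 hx)]
      · rw [if_neg (by rintro ⟨_, hx, _⟩; exact h1 hx),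
          if_neg (by rintro ⟨_, hx, _⟩; exact h2 hx)]
    have collapse : ∀ (Z W : Matrix (Fin n) (Fin n) F), InN b W →
        (W * PhiK (K1 b f t) Z) p q = ∑ k, ∑ c, W p k * (Z p c * K1 b f t p c k q) := by
      intro Z W hW
      rw [Matrix.mul_apply]
      refine Finset.sum_congr rfl fun k _ => ?_
      rw [PhiK_entry, Finset.mul_sum]
      rw [Finset.sum_eq_single p]
      · rw [Finset.mul_sum]
      · intro a _ hne
        rw [Finset.mul_sum]
        refine Finset.sum_eq_zero fun c _ => ?_
        rw [K1app, if_neg, mul_zero, mul_zero]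
        rintro ⟨h1, _⟩
        exact hne (uniqblk hcard h1 hp)
      · intro h
        exact absurd (Finset.mem_univ _) h
    rw [collapse X Y hY, collapse Y X hX]
    calc ∑ k, ∑ c, Y p k * (X p c * K1 b f t p c k q)
        = ∑ k, ∑ c, X p c * (Y p k * K1 b f t p k c q) := by
          refine Finset.sum_congr rfl fun k _ => Finset.sum_congr rfl fun c _ => ?_
          rw [hker k c]; ring
      _ = ∑ c, ∑ k, X p c * (Y p k * K1 b f t p k c q) := Finset.sum_comm
      _ = ∑ k, ∑ c, X p k * (Y p c * K1 b f t p c k q) := rfl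

theorem symphi2 (hf : IsDerN b f) (ht : 3 ≤ t) (hub : ∀ x, b x ≤ t)
    {X Y : Matrix (Fin n) (Fin n) F} (hX : InN b X) (hY : InN b Y) (p q : Fin n) :
    (PhiK (K2 b f t) X * Y) p q = (PhiK (K2 b f t) Y * X) p q := by
  by_cases hcard : (Finset.univ.filter fun x => b x = t).card = 1
  swap
  · rw [Matrix.mul_apply, Matrix.mul_apply]
    rw [Finset.sum_eq_zero fun k _ => by rw [PhiK_entry,
        Finset.sum_eq_zero fun a _ => Finset.sum_eq_zero fun c _ => by
          rw [K2_card hcard, mul_zero], zero_mul],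
      Finset.sum_eq_zero fun k _ => by rw [PhiK_entry,
        Finset.sum_eq_zero fun a _ => Finset.sum_eq_zero fun c _ => by
          rw [K2_card hcard, mul_zero], zero_mul]]
  by_cases hp : b p = 1
  swap
  · rw [Matrix.mul_apply, Matrix.mul_apply]
    rw [Finset.sum_eq_zero fun k _ => by
        rw [PhiK_zone2 (fun hc => hp hc.1), zero_mul],
      Finset.sum_eq_zero fun k _ => by
        rw [PhiK_zone2 (fun hc => hp hc.1), zero_mul]]
  by_cases hq : b q = t
  swap
  · rw [Matrix.mul_apply, Matrix.mul_apply]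
    refine Eq.trans (Finset.sum_eq_zero fun k _ => ?_) (Finset.sum_eq_zero fun k _ => ?_).symm
    · by_cases hk : b k = t - 1
      · rw [hY k q (by have := hub q; omega), mul_zero]
      · rw [PhiK_zone2 (fun hc => hk hc.2), zero_mul]
    · by_cases hk : b k = t - 1
      · rw [hX k q (by have := hub q; omega), mul_zero]
      · rw [PhiK_zone2 (fun hc => hk hc.2), zero_mul]
  · have hker : ∀ k a : Fin n, (K2 b f t a q : Matrix (Fin n) (Fin n) F) p k
        = K2 b f t k q p a := by
      intro k a
      rw [K2app, K2app]
      by_cases h1 : b a = t - 1 <;> by_cases h2 : b k = t - 1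
      · rw [if_pos ⟨h1, hq, hp, h2, hcard⟩, if_pos ⟨h2, hq, hp, h1, hcard⟩]
        exact symcol hf (by omega) (by omega) p
      · rw [if_neg (by rintro ⟨_, _, _, hx, _⟩; exact h2 hx),
          if_neg (by rintro ⟨hx, _⟩; exact h2 hx)]
      · rw [if_neg (by rintro ⟨hx, _⟩; exact h1 hx),
          if_neg (by rintro ⟨_, _, _, hx, _⟩; exact h1 hx)]
      · rw [if_neg (by rintro ⟨hx, _⟩; exact h1 hx),
          if_neg (by rintro ⟨hx, _⟩; exact h2 hx)]
    have collapse : ∀ (Z W : Matrix (Fin n) (Fin n) F), InN b W →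
        (PhiK (K2 b f t) Z * W) p q = ∑ k, ∑ a, Z a q * K2 b f t a q p k * W k q := by
      intro Z W hW
      rw [Matrix.mul_apply]
      refine Finset.sum_congr rfl fun k _ => ?_
      rw [PhiK_entry, Finset.sum_mul]
      refine Finset.sum_congr rfl fun a _ => ?_
      rw [Finset.sum_mul]
      refine Finset.sum_eq_single q ?_ ?_
      · intro c _ hne
        rw [K2app, if_neg, mul_zero, zero_mul]
        rintro ⟨_, h2', _⟩
        exact hne (uniqblk hcard h2' hq)
      · intro h
        exact absurd (Finset.mem_univ _) h
    rw [collapse X Y hY, collapse Y X hX]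
    calc ∑ k, ∑ a, X a q * K2 b f t a q p k * Y k q
        = ∑ k, ∑ a, Y k q * K2 b f t k q p a * X a q := by
          refine Finset.sum_congr rfl fun k _ => Finset.sum_congr rfl fun a _ => ?_
          rw [hker k a]; ring
      _ = ∑ a, ∑ k, Y k q * K2 b f t k q p a * X a q := Finset.sum_comm
      _ = ∑ k, ∑ a, Y a q * K2 b f t a q p k * X k q := rfl

end Phi


section Der
variable {F : Type*} [Field F] {n : ℕ} {b : Fin n → ℕ} {t : ℕ}
  {f : Matrix (Fin n) (Fin n) F →ₗ[F] Matrix (Fin n) (Fin n) F}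

theorem derPhi1 (hf : IsDerN b f) (ht : 3 ≤ t) (hub : ∀ x, b x ≤ t) (hlb : ∀ x, 1 ≤ b x) :
    IsDerN b (PhiK (K1 b f t)) := by
  constructor
  · intro A _ p q hle
    rw [PhiK_entry]
    refine Finset.sum_eq_zero fun a _ => Finset.sum_eq_zero fun c _ => ?_
    rw [K1_zone (by rintro ⟨h3, h4⟩; omega), mul_zero]
  · intro X Y hX hY
    have hL : PhiK (K1 b f t) (X * Y - Y * X) = 0 := by
      rw [PhiK_apply]
      refine Finset.sum_eq_zero fun rs _ => ?_
      by_cases hg : b rs.1 = 1 ∧ b rs.2 = 2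
      · have e1 : ∑ k, X rs.1 k * Y k rs.2 = 0 := Finset.sum_eq_zero fun k _ => by
          rcases le_or_gt (b k) (b rs.1) with h|h
          · rw [hX rs.1 k h, zero_mul]
          · rw [hY k rs.2 (by omega), mul_zero]
        have e2 : ∑ k, Y rs.1 k * X k rs.2 = 0 := Finset.sum_eq_zero fun k _ => by
          rcases le_or_gt (b k) (b rs.1) with h|h
          · rw [hY rs.1 k h, zero_mul]
          · rw [hX k rs.2 (by omega), mul_zero]
        have hz0 : (X * Y - Y * X) rs.1 rs.2 = 0 := by
          rw [Matrix.sub_apply, Matrix.mul_apply, Matrix.mul_apply, e1, e2, sub_zero]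
        rw [hz0, zero_smul]
      · have hKz : K1 b f t rs.1 rs.2 = 0 := by
          ext i j'
          rw [Matrix.zero_apply]
          exact K1_src hg
        rw [hKz, smul_zero]
    rw [hL]
    ext p q
    rw [Matrix.zero_apply, Matrix.add_apply, Matrix.sub_apply, Matrix.sub_apply]
    have h1 : (PhiK (K1 b f t) X * Y) p q = 0 := by
      rw [Matrix.mul_apply]
      refine Finset.sum_eq_zero fun k _ => ?_
      by_cases hk : b k = t
      · rw [hY k q (show b q ≤ b k by have := hub q; omega), mul_zero]
      · rw [PhiK_zone1 (fun hc => hk hc.2), zero_mul]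
    have h4 : (PhiK (K1 b f t) Y * X) p q = 0 := by
      rw [Matrix.mul_apply]
      refine Finset.sum_eq_zero fun k _ => ?_
      by_cases hk : b k = t
      · rw [hX k q (show b q ≤ b k by have := hub q; omega), mul_zero]
      · rw [PhiK_zone1 (fun hc => hk hc.2), zero_mul]
    have h23 := symphi1 (t := t) hf hlb hX hY p q
    rw [h1, h4, h23]
    ring

theorem derPhi2 (hf : IsDerN b f) (ht : 3 ≤ t) (hub : ∀ x, b x ≤ t) (hlb : ∀ x, 1 ≤ b x) :
    IsDerN b (PhiK (K2 b f t)) := by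
  constructor
  · intro A _ p q hle
    rw [PhiK_entry]
    refine Finset.sum_eq_zero fun a _ => Finset.sum_eq_zero fun c _ => ?_
    rw [K2_zone (by rintro ⟨h3, h4⟩; omega), mul_zero]
  · intro X Y hX hY
    have hL : PhiK (K2 b f t) (X * Y - Y * X) = 0 := by
      rw [PhiK_apply]
      refine Finset.sum_eq_zero fun rs _ => ?_
      by_cases hg : b rs.1 = t - 1 ∧ b rs.2 = t
      · have e1 : ∑ k, X rs.1 k * Y k rs.2 = 0 := Finset.sum_eq_zero fun k _ => by
          rcases le_or_gt (b k) (b rs.1) with h|h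
          · rw [hX rs.1 k h, zero_mul]
          · rw [hY k rs.2 (show b rs.2 ≤ b k by have := hub k; omega), mul_zero]
        have e2 : ∑ k, Y rs.1 k * X k rs.2 = 0 := Finset.sum_eq_zero fun k _ => by
          rcases le_or_gt (b k) (b rs.1) with h|h
          · rw [hY rs.1 k h, zero_mul]
          · rw [hX k rs.2 (show b rs.2 ≤ b k by have := hub k; omega), mul_zero]
        have hz0 : (X * Y - Y * X) rs.1 rs.2 = 0 := by
          rw [Matrix.sub_apply, Matrix.mul_apply, Matrix.mul_apply, e1, e2, sub_zero]
        rw [hz0, zero_smul]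
      · have hKz : K2 b f t rs.1 rs.2 = 0 := by
          ext i j'
          rw [Matrix.zero_apply]
          exact K2_src hg
        rw [hKz, smul_zero]
    rw [hL]
    ext p q
    rw [Matrix.zero_apply, Matrix.add_apply, Matrix.sub_apply, Matrix.sub_apply]
    have h1 : (Y * PhiK (K2 b f t) X) p q = 0 := by
      rw [Matrix.mul_apply]
      refine Finset.sum_eq_zero fun k _ => ?_
      by_cases hk : b k = 1
      · rw [hY p k (show b k ≤ b p by have := hlb p; omega), zero_mul]
      · rw [PhiK_zone2 (fun hc => hk hc.1), mul_zero]
    have h4 : (X * PhiK (K2 b f t) Y) p q = 0 := by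
      rw [Matrix.mul_apply]
      refine Finset.sum_eq_zero fun k _ => ?_
      by_cases hk : b k = 1
      · rw [hX p k (show b k ≤ b p by have := hlb p; omega), zero_mul]
      · rw [PhiK_zone2 (fun hc => hk hc.1), mul_zero]
    have h23 := symphi2 hf ht hub hX hY p q
    rw [h1, h4, h23]
    ring

end Der

end Stmt15Aux

open Stmt15Aux

/-- Theorem for char ≠ 2: every derivation `f` of `N` decomposes as
`f = ad X + φ + φ₁ + φ₂` with `X` block upper triangular, `φ` a linear map into the center
block `N^{1t}` vanishing on all `N^{ij}` with `j > i+1`, `φ₁` a derivation supported on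
`N^{12}` with values in `N^{2t}` (zero unless block 1 is a single index), and `φ₂` a
derivation supported on `N^{t-1,t}` with values in `N^{1,t-1}` (zero unless block `t` is a
single index). -/
theorem stmt15 {F : Type*} [Field F] {n t : ℕ} (b : Fin n → ℕ)
    (hn : 1 ≤ n) (ht : 3 ≤ t) (hmono : Monotone b)
    (hlb : ∀ r, 1 ≤ b r) (hub : ∀ r, b r ≤ t)
    (hsurj : ∀ k, 1 ≤ k → k ≤ t → ∃ r, b r = k)
    (hchar : ringChar F ≠ 2)
    (f : Matrix (Fin n) (Fin n) F →ₗ[F] Matrix (Fin n) (Fin n) F)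
    (hf : IsDerN b f) :
    ∃ (X : Matrix (Fin n) (Fin n) F)
      (φ φ₁ φ₂ : Matrix (Fin n) (Fin n) F →ₗ[F] Matrix (Fin n) (Fin n) F),
      (∀ r s, b s < b r → X r s = 0) ∧
      (∀ A, InN b A → InBlk b 1 t (φ A)) ∧
      (∀ i j, i + 1 < j → ∀ A, InBlk b i j A → φ A = 0) ∧
      IsDerN b φ₁ ∧
      (∀ A, InBlk b 1 2 A → InBlk b 2 t (φ₁ A)) ∧
      (∀ i j, 1 ≤ i → i < j → j ≤ t → ¬(i = 1 ∧ j = 2) →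
        ∀ A, InBlk b i j A → φ₁ A = 0) ∧
      ((Finset.univ.filter fun r => b r = 1).card ≠ 1 →
        ∀ A, InN b A → φ₁ A = 0) ∧
      IsDerN b φ₂ ∧
      (∀ A, InBlk b (t - 1) t A → InBlk b 1 (t - 1) (φ₂ A)) ∧
      (∀ i j, 1 ≤ i → i < j → j ≤ t → ¬(i = t - 1 ∧ j = t) →
        ∀ A, InBlk b i j A → φ₂ A = 0) ∧
      ((Finset.univ.filter fun s => b s = t).card ≠ 1 →
        ∀ A, InN b A → φ₂ A = 0) ∧
      (∀ A, InN b A → f A = X * A - A * X + φ A + φ₁ A + φ₂ A) := by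
  classical
  have h2 : (2:F) ≠ 0 := by
    intro h
    have hd : ringChar F ∣ 2 := (ringChar.spec F 2).mp h
    rcases (Nat.dvd_prime Nat.prime_two).mp hd with h1|h1
    · have h0 : ((1:ℕ):F) = 0 := (ringChar.spec F 1).mpr (by rw [h1])
      rw [Nat.cast_one] at h0
      exact one_ne_zero h0
    · exact hchar h1
  obtain ⟨z, hz⟩ : ∃ z : ℕ → Fin n, ∀ k, 1 ≤ k → k ≤ t → b (z k) = k := by
    have h : ∀ k : ℕ, ∃ r : Fin n, 1 ≤ k → k ≤ t → b r = k := by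
      intro k
      by_cases hk : 1 ≤ k ∧ k ≤ t
      · obtain ⟨r, hr⟩ := hsurj k hk.1 hk.2
        exact ⟨r, fun _ _ => hr⟩
      · exact ⟨⟨0, hn⟩, fun h1' h2' => absurd ⟨h1', h2'⟩ hk⟩
    choose z hz using h
    exact ⟨z, hz⟩
  set Xm : Matrix (Fin n) (Fin n) F := XX b f z t with hXm
  set P1 : Matrix (Fin n) (Fin n) F →ₗ[F] Matrix (Fin n) (Fin n) F :=
    PhiK (K1 b f t) with hP1
  set P2 : Matrix (Fin n) (Fin n) F →ₗ[F] Matrix (Fin n) (Fin n) F :=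
    PhiK (K2 b f t) with hP2
  set adX : Matrix (Fin n) (Fin n) F →ₗ[F] Matrix (Fin n) (Fin n) F :=
    LinearMap.mulLeft F Xm - LinearMap.mulRight F Xm with hadX
  set φ : Matrix (Fin n) (Fin n) F →ₗ[F] Matrix (Fin n) (Fin n) F :=
    f - adX - P1 - P2 with hφ
  have hφapp : ∀ A, φ A = f A - (Xm * A - A * Xm) - P1 A - P2 A := by
    intro A
    rw [hφ, hadX]
    simp only [LinearMap.sub_apply, LinearMap.mulLeft_apply, LinearMap.mulRight_apply]
  have hφE : ∀ r s, b r < b s → ∀ p q, ¬(b p = 1 ∧ b q = t) → φ (E r s) p q = 0 := by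
    intro r s hrs p q hng
    have hm := mainentry hf ht hub hlb hz h2 hrs p q hng
    have he : φ (E r s) p q = f (E r s) p q
        - ((if q = s then Xm p r else 0) - (if p = r then Xm s q else 0))
        - K1 b f t r s p q - K2 b f t r s p q := by
      rw [hφapp]
      simp only [Matrix.sub_apply]
      rw [mulE, Emul, hP1, hP2, PhiK_E, PhiK_E]
    rw [he]
    linear_combination hm
  have hφE2 : ∀ r s, b r + 1 < b s → φ (E r s) = 0 := by
    intro r s hadj
    ext p q
    have hm := mainnonadj hf ht hub hlb hz h2 (show b r < b s by omega) hadj p q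
    have he : φ (E r s) p q = f (E r s) p q
        - ((if q = s then Xm p r else 0) - (if p = r then Xm s q else 0))
        - K1 b f t r s p q - K2 b f t r s p q := by
      rw [hφapp]
      simp only [Matrix.sub_apply]
      rw [mulE, Emul, hP1, hP2, PhiK_E, PhiK_E]
    rw [Matrix.zero_apply, he]
    linear_combination hm
  refine ⟨Xm, φ, P1, P2, ?_, ?_, ?_, ?_, ?_, ?_, ?_, ?_, ?_, ?_, ?_, ?_⟩
  · intro r s h
    exact Xupper hf ht hub hz h
  · intro A hA p q hng
    rw [gdecomp φ A, Matrix.sum_apply]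
    refine Finset.sum_eq_zero fun rs _ => ?_
    rw [Matrix.smul_apply, smul_eq_mul]
    rcases le_or_gt (b rs.2) (b rs.1) with h|h
    · rw [hA rs.1 rs.2 h, zero_mul]
    · rw [hφE rs.1 rs.2 h p q hng, mul_zero]
  · intro i j hij A hA
    ext p q
    rw [gdecomp φ A, Matrix.sum_apply, Matrix.zero_apply]
    refine Finset.sum_eq_zero fun rs _ => ?_
    rw [Matrix.smul_apply, smul_eq_mul]
    by_cases hA0 : A rs.1 rs.2 = 0
    · rw [hA0, zero_mul]
    · have hb : b rs.1 = i ∧ b rs.2 = j := by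
        by_contra hc
        exact hA0 (hA rs.1 rs.2 hc)
      rw [hφE2 rs.1 rs.2 (by omega), Matrix.zero_apply, mul_zero]
  · exact derPhi1 hf ht hub hlb
  · intro A _ p q hng
    exact PhiK_zone1 hng
  · intro i j hi hij hjt hne A hA
    ext p q
    rw [hP1, PhiK_entry, Matrix.zero_apply]
    refine Finset.sum_eq_zero fun a _ => Finset.sum_eq_zero fun c _ => ?_
    by_cases hg : b a = 1 ∧ b c = 2
    · rw [hA a c (by rintro ⟨ha, hc⟩; exact hne ⟨by omega, by omega⟩), zero_mul]
    · rw [K1_src hg, mul_zero]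
  · intro hcard A _
    ext p q
    rw [hP1, PhiK_entry, Matrix.zero_apply]
    refine Finset.sum_eq_zero fun a _ => Finset.sum_eq_zero fun c _ => ?_
    rw [K1_card hcard, mul_zero]
  · exact derPhi2 hf ht hub hlb
  · intro A _ p q hng
    exact PhiK_zone2 hng
  · intro i j hi hij hjt hne A hA
    ext p q
    rw [hP2, PhiK_entry, Matrix.zero_apply]
    refine Finset.sum_eq_zero fun a _ => Finset.sum_eq_zero fun c _ => ?_
    by_cases hg : b a = t - 1 ∧ b c = t
    · rw [hA a c (by rintro ⟨ha, hc⟩; exact hne ⟨by omega, by omega⟩), zero_mul]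
    · rw [K2_src hg, mul_zero]
  · intro hcard A _
    ext p q
    rw [hP2, PhiK_entry, Matrix.zero_apply]
    refine Finset.sum_eq_zero fun a _ => Finset.sum_eq_zero fun c _ => ?_
    rw [K2_card hcard, mul_zero]
  · intro A _
    rw [hφapp A]
    abel
end

section
/- Assume char F = 2 and let f be a derivation of N. (i) If block 1 contains at least two indices (#{r : b r = 1} ≥ 2), then for every A ∈ N^{12}, f(A) r s = 0 whenever (b r, b s) = (3, t), and for every A ∈ N^{13}, f(A) r s = 0 whenever (b r, b s) = (2, t). (ii) If block 1 consists of a single index r₁, then, writing E_u ∈ N^{12} for the matrix with entry 1 in position (r₁, u) and 0 elsewhere (for b u = 2), and E'_v ∈ N^{13} for the matrix with entry 1 in position (r₁, v) and 0 elsewhere (for b v = 3), one has f(E'_v) u s = f(E_u) v s for all indices u with b u = 2, v with b v = 3, and s with b s = t. -/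
open Matrix in
lemma stdInN {F : Type*} [Field F] {n : ℕ} (b : Fin n → ℕ) {p u : Fin n}
    (h : b p < b u) (c : F) : InN b (single p u c) := by
  intro r s hrs
  simp only [single, of_apply, ite_eq_right_iff]
  rintro ⟨rfl, rfl⟩
  omega

open Matrix in
/-- Key identity: for `p q` in block 1, `u` in block 2, `v` in block 3, `ρ` in block 1,
`s` in block `t`, we have `δ_{ρq} f(E_{pu})_{vs} = δ_{ρp} f(E_{qv})_{us}`. -/
lemma key {F : Type*} [Field F] {n t : ℕ} (b : Fin n → ℕ)
    (ht : 3 ≤ t)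
    (f : Matrix (Fin n) (Fin n) F →ₗ[F] Matrix (Fin n) (Fin n) F)
    (hf : IsDerN b f) {p q u v : Fin n}
    (hp : b p = 1) (hq : b q = 1) (hu : b u = 2) (hv : b v = 3)
    {ρ s : Fin n} (hρ : b ρ = 1) (hs : b s = t) :
    (if ρ = q then f (single p u (1 : F)) v s else 0)
      = (if ρ = p then f (single q v (1 : F)) u s else 0) := by
  set A := single p u (1 : F) with hA
  set B := single q v (1 : F) with hB
  have hAN : InN b A := stdInN b (by omega) 1
  have hBN : InN b B := stdInN b (by omega) 1
  have hAB : A * B = 0 := single_mul_single_of_ne _ _ _ _ (by intro h; rw [h] at hu; omega) _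
  have hBA : B * A = 0 := single_mul_single_of_ne _ _ _ _ (by intro h; rw [h] at hv; omega) _
  have h0 := hf.2 A B hAN hBN
  rw [hAB, hBA, sub_zero, map_zero] at h0
  have h1 := congrFun (congrFun h0 ρ) s
  -- compute each entry
  have e1 : (f A * B) ρ s = 0 := by
    rcases eq_or_ne s v with rfl | hsv
    · rw [hB, mul_single_apply_same, mul_one]
      exact hf.1 A hAN ρ q (by omega)
    · rw [hB, mul_single_apply_of_ne _ _ _ _ _ hsv]
  have e2 : (B * f A) ρ s = if ρ = q then f A v s else 0 := by
    rcases eq_or_ne ρ q with rfl | hρq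
    · rw [hB, single_mul_apply_same, one_mul, if_pos rfl]
    · rw [hB, single_mul_apply_of_ne _ _ _ _ _ hρq, if_neg hρq]
  have e3 : (A * f B) ρ s = if ρ = p then f B u s else 0 := by
    rcases eq_or_ne ρ p with rfl | hρp
    · rw [hA, single_mul_apply_same, one_mul, if_pos rfl]
    · rw [hA, single_mul_apply_of_ne _ _ _ _ _ hρp, if_neg hρp]
  have e4 : (f B * A) ρ s = 0 := by
    rw [hA, mul_single_apply_of_ne]
    intro h; rw [h] at hs; omega
  simp only [Matrix.zero_apply, Matrix.add_apply, Matrix.sub_apply, e1, e2, e3, e4] at h1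
  rw [zero_sub, sub_zero] at h1
  have := h1.symm
  rw [neg_add_eq_zero] at this
  exact this

open Matrix in
lemma fA_entry {F : Type*} [Field F] {n : ℕ}
    (f : Matrix (Fin n) (Fin n) F →ₗ[F] Matrix (Fin n) (Fin n) F)
    (A : Matrix (Fin n) (Fin n) F) (r s : Fin n) :
    f A r s = ∑ i, ∑ j, A i j * f (single i j (1 : F)) r s := by
  conv_lhs => rw [matrix_eq_sum_single A]
  rw [map_sum, Matrix.sum_apply]
  refine Finset.sum_congr rfl fun i _ => ?_
  rw [map_sum, Matrix.sum_apply]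
  refine Finset.sum_congr rfl fun j _ => ?_
  have : single i j (A i j) = A i j • single i j (1 : F) := by
    rw [smul_single, smul_eq_mul, mul_one]
  rw [this, _root_.map_smul, Matrix.smul_apply, smul_eq_mul]

/-- for `char F = 2` and a derivation `f` of `N`: (i) if block 1 has at least
two indices then the `(3,t)` block of `f(N^{12})` and the `(2,t)` block of `f(N^{13})`
vanish; (ii) if block 1 is a single index `r₁` then `f(E'_v) u s = f(E_u) v s` for
`b u = 2`, `b v = 3`, `b s = t`, where `E_u = E^{12}_{r₁ u}` and `E'_v = E^{13}_{r₁ v}`. -/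
theorem stmt16 {F : Type*} [Field F] {n t : ℕ} (b : Fin n → ℕ)
    (hn : 1 ≤ n) (ht : 3 ≤ t) (hmono : Monotone b)
    (hlb : ∀ r, 1 ≤ b r) (hub : ∀ r, b r ≤ t)
    (hsurj : ∀ k, 1 ≤ k → k ≤ t → ∃ r, b r = k)
    (hchar : ringChar F = 2)
    (f : Matrix (Fin n) (Fin n) F →ₗ[F] Matrix (Fin n) (Fin n) F)
    (hf : IsDerN b f) :
    (2 ≤ (Finset.univ.filter fun r => b r = 1).card →
      (∀ A, InBlk b 1 2 A → ∀ r s, b r = 3 → b s = t → f A r s = 0) ∧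
      (∀ A, InBlk b 1 3 A → ∀ r s, b r = 2 → b s = t → f A r s = 0)) ∧
    (∀ r₁ : Fin n, b r₁ = 1 → (Finset.univ.filter fun r => b r = 1).card = 1 →
      ∀ u v s, b u = 2 → b v = 3 → b s = t →
        f (Matrix.single r₁ v (1 : F)) u s
          = f (Matrix.single r₁ u (1 : F)) v s) := by
  constructor
  · intro hcard
    obtain ⟨p₀, hp₀, q₀, hq₀, hpq₀⟩ := Finset.one_lt_card.mp hcard
    rw [Finset.mem_filter] at hp₀ hq₀
    constructor
    · intro A hA v s hv hs
      rw [fA_entry]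
      refine Finset.sum_eq_zero fun i _ => Finset.sum_eq_zero fun j _ => ?_
      by_cases hAij : A i j = 0
      · rw [hAij, zero_mul]
      · have hij : b i = 1 ∧ b j = 2 := by
          by_contra h; exact hAij (hA i j h)
        -- choose q in block 1 distinct from i
        obtain ⟨q, hq1, hqi⟩ : ∃ q, b q = 1 ∧ q ≠ i := by
          rcases eq_or_ne p₀ i with rfl | h
          · exact ⟨q₀, hq₀.2, fun h => hpq₀ h.symm⟩
          · exact ⟨p₀, hp₀.2, h⟩
        have := key b ht f hf hij.1 hq1 hij.2 hv hq1 hs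
        rw [if_pos rfl, if_neg hqi] at this
        rw [this, mul_zero]
    · intro A hA u s hu hs
      rw [fA_entry]
      refine Finset.sum_eq_zero fun i _ => Finset.sum_eq_zero fun j _ => ?_
      by_cases hAij : A i j = 0
      · rw [hAij, zero_mul]
      · have hij : b i = 1 ∧ b j = 3 := by
          by_contra h; exact hAij (hA i j h)
        obtain ⟨p, hp1, hpi⟩ : ∃ p, b p = 1 ∧ p ≠ i := by
          rcases eq_or_ne p₀ i with rfl | h
          · exact ⟨q₀, hq₀.2, fun h => hpq₀ h.symm⟩
          · exact ⟨p₀, hp₀.2, h⟩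
        have := key b ht f hf hp1 hij.1 hu hij.2 hp1 hs
        rw [if_pos rfl, if_neg hpi] at this
        rw [← this, mul_zero]
  · intro r₁ hr₁ _ u v s hu hv hs
    have := key b ht f hf hr₁ hr₁ hu hv hr₁ hs
    rw [if_pos rfl, if_pos rfl] at this
    exact this.symm
end

section
/- Assume char F = 2 and let f be a derivation of N. Then there exist: (1) a block upper triangular matrix X (an n×n matrix with X r s = 0 whenever b r > b s); (2) an F-linear map φ : N → N whose image is contained in N^{1t} and which vanishes on every N^{ij} with j > i+1; (3) a derivation φ₁ of N with φ₁(N^{12}) ⊆ N^{2t}, φ₁(N^{ij}) = 0 for every (i,j) ≠ (1,2), and φ₁ = 0 unless block 1 consists of a single index; (4) a derivation φ₂ of N with φ₂(N^{t−1,t}) ⊆ N^{1,t−1}, φ₂(N^{ij}) = 0 for every (i,j) ≠ (t−1,t), and φ₂ = 0 unless block t consists of a single index; (5) a derivation ψ₁ of N with ψ₁(N^{12}) ⊆ N^{3t}, ψ₁(N^{13}) ⊆ N^{2t}, ψ₁(N^{ij}) = 0 for every (i,j) ∉ {(1,2),(1,3)}, and ψ₁ = 0 unless block 1 consists of a single index;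 (6) a derivation ψ₂ of N with ψ₂(N^{t−1,t}) ⊆ N^{1,t−2}, ψ₂(N^{t−2,t}) ⊆ N^{1,t−1}, ψ₂(N^{ij}) = 0 for every (i,j) ∉ {(t−1,t),(t−2,t)}, and ψ₂ = 0 unless block t consists of a single index; such that f(A) = X·A − A·X + φ(A) + φ₁(A) + φ₂(A) + ψ₁(A) + ψ₂(A) for all A ∈ N. -/
namespace S18

open Matrix

variable {F : Type*} [Field F] {n t : ℕ}

/-- matrix unit -/
def E (r s : Fin n) : Matrix (Fin n) (Fin n) F := Matrix.single r s 1

variable {b : Fin n → ℕ}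

lemma E_apply (r s p q : Fin n) : (E (F := F) r s) p q = if p = r ∧ q = s then 1 else 0 := by
  by_cases h : p = r ∧ q = s
  · obtain ⟨rfl, rfl⟩ := h; simp [E]
  · rw [if_neg h]
    exact Matrix.single_apply_of_ne (i := r) (j := s) (i' := p) (j' := q) (c := (1 : F)) (by tauto)

lemma mul_E_apply (M : Matrix (Fin n) (Fin n) F) (u v p q : Fin n) :
    (M * E (F := F) u v) p q = if q = v then M p u else 0 := by
  by_cases h : q = v
  · subst h; simpa [E] using Matrix.mul_single_apply_same (1 : F) u v p M
  · rw [if_neg h]; exact Matrix.mul_single_apply_of_ne 1 u v p q h M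

lemma E_mul_apply (u v : Fin n) (M : Matrix (Fin n) (Fin n) F) (p q : Fin n) :
    (E (F := F) u v * M) p q = if p = u then M v q else 0 := by
  by_cases h : p = u
  · subst h; simpa [E] using Matrix.single_mul_apply_same (1 : F) u v q M
  · rw [if_neg h]; exact Matrix.single_mul_apply_of_ne 1 u v p q h M

lemma E_inN {r s : Fin n} (hrs : b r < b s) : InN b (E (F := F) r s) := by
  intro p q h
  rw [E_apply]
  rcases Decidable.em (p = r ∧ q = s) with ⟨rfl, rfl⟩ | hh
  · omega
  · rw [if_neg hh]

variable (f : Matrix (Fin n) (Fin n) F →ₗ[F] Matrix (Fin n) (Fin n) F)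

/-- coefficients of the derivation on matrix units -/
def cc (r s p q : Fin n) : F := f (E r s) p q

variable {f}

lemma cc_inN (hf : IsDerN b f) {r s : Fin n} (hrs : b r < b s) {p q : Fin n}
    (hqp : b q ≤ b p) : cc f r s p q = 0 :=
  hf.1 _ (E_inN hrs) p q hqp

/-- The master relation: entrywise consequence of the derivation property on
matrix units. -/
lemma master (hf : IsDerN b f) {r s u v : Fin n} (hrs : b r < b s) (huv : b u < b v)
    (p q : Fin n) :
    (if s = u then cc f r v p q else 0) - (if v = r then cc f u s p q else 0)
      = ((if q = v then cc f r s p u else 0) - (if p = u then cc f r s v q else 0))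
        + ((if p = r then cc f u v s q else 0) - (if q = s then cc f u v p r else 0)) := by
  have H := hf.2 (E r s) (E u v) (E_inN hrs) (E_inN huv)
  have hL : E (F := F) r s * E u v = if s = u then E r v else 0 := by
    by_cases h : s = u
    · subst h; simp [E]
    · simp [E, h]
  have hR : E (F := F) u v * E r s = if v = r then E u s else 0 := by
    by_cases h : v = r
    · subst h; simp [E]
    · simp [E, h]
  rw [hL, hR] at H
  have H2 := congrFun (congrFun (congrArg (fun M => (M : Matrix (Fin n) (Fin n) F)) H) p) q
  simp only [map_sub, apply_ite f, map_zero, Matrix.sub_apply, Matrix.add_apply,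
    apply_ite (fun M : Matrix (Fin n) (Fin n) F => M p q), Matrix.zero_apply,
    mul_E_apply, E_mul_apply] at H2
  simpa [cc] using H2


/-- Row lemma: entries of `f(E r s)` in a row `p ≠ r`, given a lower witness `u`. -/
lemma rowL (hf : IsDerN b f) {r s u p : Fin n} (hrs : b r < b s) (hup : b u < b p)
    (hur : u ≠ r) (hus : u ≠ s) (hpr : p ≠ r) (q : Fin n) :
    cc f r s p q = - (if q = s then cc f u p u r else 0) := by
  have H := master hf hrs hup u q
  rw [if_neg (fun h => hus (h.symm)), if_neg hpr, if_pos rfl,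
    cc_inN hf hrs (le_refl (b u)), if_neg hur] at H
  simp only [ite_self] at H
  linear_combination H

/-- Column lemma: entries of `f(E r s)` in a column `q ≠ s`, given an upper witness `v`. -/
lemma colL (hf : IsDerN b f) {r s v q : Fin n} (hrs : b r < b s) (hqv : b q < b v)
    (hvr : v ≠ r) (hvs : v ≠ s) (hsq : s ≠ q) (p : Fin n) :
    cc f r s p q = - (if p = r then cc f q v s v else 0) := by
  have H := master hf hrs hqv p v
  rw [if_neg hsq, if_neg hvr, if_pos rfl, if_neg hvs,
    cc_inN hf hrs (le_refl (b v))] at H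
  simp only [ite_self] at H
  linear_combination -H

/-- relation from `[E r s, E s y] = E r y`. -/
lemma star2 (hf : IsDerN b f) {r s y : Fin n} (hrs : b r < b s) (hsy : b s < b y)
    (p q : Fin n) :
    cc f r y p q = ((if q = y then cc f r s p s else 0) - (if p = s then cc f r s y q else 0))
      + ((if p = r then cc f s y s q else 0) - (if q = s then cc f s y p r else 0)) := by
  have H := master hf hrs hsy p q
  rw [if_pos rfl, if_neg (fun h : y = r => by rw [h] at hsy; omega)] at H
  linear_combination H

/-- relation from `[E x r, E r s] = E x s`. -/
lemma star3 (hf : IsDerN b f) {x r s : Fin n} (hxr : b x < b r) (hrs : b r < b s)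
    (p q : Fin n) :
    cc f x s p q = ((if q = s then cc f x r p r else 0) - (if p = r then cc f x r s q else 0))
      + ((if p = x then cc f r s r q else 0) - (if q = r then cc f r s p x else 0)) := by
  have H := master hf hxr hrs p q
  rw [if_pos rfl, if_neg (fun h : s = x => by rw [h] at hrs; omega)] at H
  linear_combination H

/-- diagonal coefficient -/
def dg (r s : Fin n) : F := cc f r s r s

/-- additivity of the diagonal coefficient along chains -/
lemma dg_add (hf : IsDerN b f) {r s y : Fin n} (hrs : b r < b s) (hsy : b s < b y) :
    dg (f := f) r y = dg (f := f) r s + dg (f := f) s y := by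
  have H := star2 hf hrs hsy r y
  have hrs' : r ≠ s := fun h => by rw [h] at hrs; omega
  have hys : y ≠ s := fun h => by rw [h] at hsy; omega
  rw [if_pos rfl, if_pos rfl, if_neg hrs', if_neg hys] at H
  unfold dg
  linear_combination H

/-- row transfer: moving the column of the source up (used for the X-columns). -/
lemma colTransfer (hf : IsDerN b f) {r s y p : Fin n} (hrs : b r < b s) (hsy : b s < b y)
    (hpr : p ≠ r) (hps : p ≠ s) :
    cc f r s p s = cc f r y p y := by
  have H := star2 hf hrs hsy p y
  have hys : y ≠ s := fun h => by rw [h] at hsy; omega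
  rw [if_pos rfl, if_neg hps, if_neg hpr, if_neg hys] at H
  linear_combination -H

/-- row transfer within a source: relating `cc r s r q` and `cc x s x q`, `b x < b r`. -/
lemma rowTransfer (hf : IsDerN b f) {x r s q : Fin n} (hxr : b x < b r) (hrs : b r < b s)
    (hqs : q ≠ s) (hqr : q ≠ r) :
    cc f x s x q = cc f r s r q := by
  have H := star3 hf hxr hrs x q
  have hxr' : x ≠ r := fun h => by rw [h] at hxr; omega
  rw [if_neg hqs, if_neg hxr', if_pos rfl, if_neg hqr] at H
  linear_combination H


section blocks

variable (b) in
/-- projection onto the (k,l) block -/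
def blkP (k l : ℕ) : Matrix (Fin n) (Fin n) F →ₗ[F] Matrix (Fin n) (Fin n) F where
  toFun M := Matrix.of fun r s => if b r = k ∧ b s = l then M r s else 0
  map_add' M N := by ext r s; by_cases h : b r = k ∧ b s = l <;> simp [h]
  map_smul' c M := by ext r s; by_cases h : b r = k ∧ b s = l <;> simp [h]

variable (b) in
/-- projection onto the adjacent blocks -/
def adjP : Matrix (Fin n) (Fin n) F →ₗ[F] Matrix (Fin n) (Fin n) F where
  toFun M := Matrix.of fun r s => if b s = b r + 1 then M r s else 0
  map_add' M N := by ext r s; by_cases h : b s = b r + 1 <;> simp [h]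
  map_smul' c M := by ext r s; by_cases h : b s = b r + 1 <;> simp [h]

lemma blkP_apply (k l : ℕ) (M : Matrix (Fin n) (Fin n) F) (r s : Fin n) :
    blkP b k l M r s = if b r = k ∧ b s = l then M r s else 0 := rfl

lemma adjP_apply (M : Matrix (Fin n) (Fin n) F) (r s : Fin n) :
    adjP b M r s = if b s = b r + 1 then M r s else 0 := rfl

lemma blkP_inBlk (k l : ℕ) (M : Matrix (Fin n) (Fin n) F) : InBlk b k l (blkP b k l M) :=
  fun r s h => by rw [blkP_apply, if_neg h]

lemma blkP_inN (k l : ℕ) {M : Matrix (Fin n) (Fin n) F} (hM : InN b M) :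
    InN b (blkP b k l M) := by
  intro r s h
  rw [blkP_apply]
  split
  · exact hM r s h
  · rfl

lemma blkP_of_inBlk {i j k l : ℕ} {M : Matrix (Fin n) (Fin n) F} (hM : InBlk b i j M)
    (h : ¬(k = i ∧ l = j)) : blkP b k l M = 0 := by
  ext r s
  rw [blkP_apply]
  by_cases h2 : b r = k ∧ b s = l
  · rw [if_pos h2, Matrix.zero_apply]
    exact hM r s (by rintro ⟨h3, h4⟩; exact h ⟨by omega, by omega⟩)
  · rw [if_neg h2, Matrix.zero_apply]

lemma blkP_eq_self {i j : ℕ} {M : Matrix (Fin n) (Fin n) F} (hM : InBlk b i j M) :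
    blkP b i j M = M := by
  ext r s
  rw [blkP_apply]
  by_cases h2 : b r = i ∧ b s = j
  · rw [if_pos h2]
  · rw [if_neg h2, hM r s h2]

lemma InN_add {X Y : Matrix (Fin n) (Fin n) F} (hX : InN b X) (hY : InN b Y) :
    InN b (X + Y) := fun r s h => by rw [Matrix.add_apply, hX r s h, hY r s h, add_zero]

lemma blkP_diag_inN {k : ℕ} {M : Matrix (Fin n) (Fin n) F} (hM : InN b M) :
    blkP b k k M = 0 := by
  ext r s
  rw [blkP_apply, Matrix.zero_apply]
  split
  · next h => exact hM r s (by omega)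
  · rfl

lemma adjP_of_inBlk_far {i j : ℕ} {M : Matrix (Fin n) (Fin n) F} (hM : InBlk b i j M)
    (h : j ≠ i + 1) : adjP b M = 0 := by
  ext r s
  rw [adjP_apply, Matrix.zero_apply]
  split
  · next h2 => exact hM r s (by rintro ⟨h3, h4⟩; omega)
  · rfl

lemma adjP_of_inBlk_adj {i j : ℕ} {M : Matrix (Fin n) (Fin n) F} (hM : InBlk b i j M)
    (h : j = i + 1) : adjP b M = M := by
  ext r s
  rw [adjP_apply]
  split
  · rfl
  · next h2 => exact (hM r s (by rintro ⟨h3, h4⟩; omega)).symm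

lemma mul_blk_zero {i j k l : ℕ} {A B : Matrix (Fin n) (Fin n) F} (hA : InBlk b i j A)
    (hB : InBlk b k l B) (h : j ≠ k) : A * B = 0 := by
  ext r s
  rw [Matrix.mul_apply, Matrix.zero_apply]
  refine Finset.sum_eq_zero fun u _ => ?_
  by_cases hu : b u = j
  · rw [hB u s (by rintro ⟨h3, h4⟩; omega), mul_zero]
  · rw [hA r u (by rintro ⟨h3, h4⟩; omega), zero_mul]

lemma inBlk_mul {i j l : ℕ} {A B : Matrix (Fin n) (Fin n) F} (hA : InBlk b i j A)
    (hB : InBlk b j l B) : InBlk b i l (A * B) := by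
  intro r s h
  rw [Matrix.mul_apply]
  refine Finset.sum_eq_zero fun u _ => ?_
  by_cases hr : b r = i ∧ b u = j
  · rw [hB u s (by rintro ⟨h3, h4⟩; exact h ⟨hr.1, h4⟩), mul_zero]
  · rw [hA r u hr, zero_mul]

lemma top_mul_inN (hub : ∀ r, b r ≤ t) {i : ℕ} {A M : Matrix (Fin n) (Fin n) F}
    (hA : InBlk b i t A) (hM : InN b M) : A * M = 0 := by
  ext r s
  rw [Matrix.mul_apply, Matrix.zero_apply]
  refine Finset.sum_eq_zero fun u _ => ?_
  by_cases hu : b u = t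
  · rw [hM u s (by have := hub s; omega), mul_zero]
  · rw [hA r u (by tauto), zero_mul]

lemma inN_mul_bot (hlb : ∀ r, 1 ≤ b r) {j : ℕ} {A M : Matrix (Fin n) (Fin n) F}
    (hA : InBlk b 1 j A) (hM : InN b M) : M * A = 0 := by
  ext r s
  rw [Matrix.mul_apply, Matrix.zero_apply]
  refine Finset.sum_eq_zero fun u _ => ?_
  by_cases hu : b u = 1
  · rw [hM r u (by have := hlb r; omega), zero_mul]
  · rw [hA u s (by tauto), mul_zero]

lemma blkP_mul_left {i j : ℕ} {A : Matrix (Fin n) (Fin n) F} (hA : InBlk b i j A)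
    (M : Matrix (Fin n) (Fin n) F) (l : ℕ) :
    blkP b i l (A * M) = A * blkP b j l M := by
  ext r s
  rw [blkP_apply, Matrix.mul_apply]
  by_cases h : b r = i ∧ b s = l
  · rw [if_pos h, Matrix.mul_apply]
    refine Finset.sum_congr rfl fun u _ => ?_
    by_cases hu : b u = j
    · rw [blkP_apply, if_pos ⟨hu, h.2⟩]
    · rw [hA r u (by tauto), zero_mul, zero_mul]
  · rw [if_neg h, Matrix.mul_apply]
    refine (Finset.sum_eq_zero fun u _ => ?_).symm
    by_cases hru : b r = i ∧ b u = j
    · rw [blkP_apply, if_neg (by rintro ⟨h3, h4⟩; exact h ⟨hru.1, h4⟩), mul_zero]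
    · rw [hA r u hru, zero_mul]

lemma blkP_mul_right {i j : ℕ} {A : Matrix (Fin n) (Fin n) F} (hA : InBlk b i j A)
    (M : Matrix (Fin n) (Fin n) F) (k : ℕ) :
    blkP b k j (M * A) = blkP b k i M * A := by
  ext r s
  rw [blkP_apply, Matrix.mul_apply]
  by_cases h : b r = k ∧ b s = j
  · rw [if_pos h, Matrix.mul_apply]
    refine Finset.sum_congr rfl fun u _ => ?_
    by_cases hu : b u = i
    · rw [blkP_apply, if_pos ⟨h.1, hu⟩]
    · rw [hA u s (by tauto), mul_zero, mul_zero]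
  · rw [if_neg h, Matrix.mul_apply]
    refine (Finset.sum_eq_zero fun u _ => ?_).symm
    by_cases hus : b u = i ∧ b s = j
    · rw [blkP_apply, if_neg (by rintro ⟨h3, h4⟩; exact h ⟨h3, hus.2⟩), zero_mul]
    · rw [hA u s (by rintro ⟨h3, h4⟩; exact hus ⟨by omega, h4⟩), mul_zero]

lemma blkP_mul_left_ne {i j k l : ℕ} {A : Matrix (Fin n) (Fin n) F} (hA : InBlk b i j A)
    (M : Matrix (Fin n) (Fin n) F) (h : k ≠ i) : blkP b k l (A * M) = 0 := by
  ext r s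
  rw [blkP_apply, Matrix.zero_apply]
  split
  · next h2 =>
    rw [Matrix.mul_apply]
    refine Finset.sum_eq_zero fun u _ => ?_
    rw [hA r u (by rintro ⟨h3, h4⟩; omega), zero_mul]
  · rfl

lemma blkP_mul_right_ne {i j k l : ℕ} {A : Matrix (Fin n) (Fin n) F} (hA : InBlk b i j A)
    (M : Matrix (Fin n) (Fin n) F) (h : l ≠ j) : blkP b k l (M * A) = 0 := by
  ext r s
  rw [blkP_apply, Matrix.zero_apply]
  split
  · next h2 =>
    rw [Matrix.mul_apply]
    refine Finset.sum_eq_zero fun u _ => ?_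
    rw [hA u s (by rintro ⟨h3, h4⟩; omega), mul_zero]
  · rfl

lemma mul_entry_far {X Y : Matrix (Fin n) (Fin n) F} (hX : InN b X) (hY : InN b Y)
    {r s : Fin n} (h : b s ≤ b r + 1) : (X * Y) r s = 0 := by
  rw [Matrix.mul_apply]
  refine Finset.sum_eq_zero fun u _ => ?_
  by_cases hu : b u ≤ b r
  · rw [hX r u hu, zero_mul]
  · rw [hY u s (by omega), mul_zero]

lemma adjP_mul {X Y : Matrix (Fin n) (Fin n) F} (hX : InN b X) (hY : InN b Y) : adjP b (X * Y) = 0 := by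
  ext r s
  rw [adjP_apply, Matrix.zero_apply]
  split
  · next h => exact mul_entry_far hX hY (by omega)
  · rfl

lemma blkP_mul_mid {X Y : Matrix (Fin n) (Fin n) F} (hX : InN b X) (hY : InN b Y) (i : ℕ) :
    blkP b i (i+2) (X * Y) = blkP b i (i+1) X * blkP b (i+1) (i+2) Y := by
  ext r s
  rw [blkP_apply, Matrix.mul_apply]
  by_cases h : b r = i ∧ b s = i + 2
  · rw [if_pos h, Matrix.mul_apply]
    refine Finset.sum_congr rfl fun u _ => ?_
    by_cases hu : b u = i + 1
    · rw [blkP_apply, blkP_apply, if_pos ⟨h.1, hu⟩, if_pos ⟨hu, h.2⟩]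
    · by_cases hu2 : b u ≤ b r
      · rw [hX r u hu2, blkP_apply, if_neg (by tauto), zero_mul, zero_mul]
      · rw [hY u s (by omega), blkP_apply (i+1) (i+2), if_neg (by rintro ⟨h3, h4⟩; omega),
          mul_zero, mul_zero]
  · rw [if_neg h, Matrix.mul_apply]
    refine (Finset.sum_eq_zero fun u _ => ?_).symm
    by_cases hru : b r = i ∧ b u = i + 1
    · rw [blkP_apply (i+1) (i+2), if_neg (by rintro ⟨h3, h4⟩; exact h ⟨hru.1, h4⟩), mul_zero]
    · rw [blkP_apply, if_neg hru, zero_mul]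

lemma blk_decomp (hlb : ∀ r, 1 ≤ b r) (hub : ∀ r, b r ≤ t)
    (M : Matrix (Fin n) (Fin n) F) :
    M = ∑ i ∈ Finset.Icc 1 t, ∑ j ∈ Finset.Icc 1 t, blkP b i j M := by
  ext r s
  rw [Matrix.sum_apply]
  rw [Finset.sum_eq_single_of_mem (b r) (Finset.mem_Icc.2 ⟨hlb r, hub r⟩)]
  · rw [Matrix.sum_apply]
    rw [Finset.sum_eq_single_of_mem (b s) (Finset.mem_Icc.2 ⟨hlb s, hub s⟩)]
    · rw [blkP_apply, if_pos ⟨rfl, rfl⟩]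
    · intro j _ hj
      rw [blkP_apply, if_neg (by tauto)]
  · intro i _ hi
    rw [Matrix.sum_apply]
    refine Finset.sum_eq_zero fun j _ => ?_
    rw [blkP_apply, if_neg (by tauto)]

lemma f_apply_eq_sum {f : Matrix (Fin n) (Fin n) F →ₗ[F] Matrix (Fin n) (Fin n) F}
    (M : Matrix (Fin n) (Fin n) F) (p q : Fin n) :
    f M p q = ∑ r, ∑ s, M r s * cc f r s p q := by
  conv_lhs => rw [Matrix.matrix_eq_sum_single M]
  rw [map_sum, Matrix.sum_apply]
  refine Finset.sum_congr rfl fun r _ => ?_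
  rw [map_sum, Matrix.sum_apply]
  refine Finset.sum_congr rfl fun s _ => ?_
  have : Matrix.single r s (M r s) = M r s • E (F := F) r s := by
    rw [E, Matrix.smul_single, smul_eq_mul, mul_one]
  rw [this, _root_.map_smul, Matrix.smul_apply, smul_eq_mul, cc]

end blocks


section XX

variable (b f) in
/-- the diagonal of the inner part -/
noncomputable def rho (w : ℕ → Fin n) (p : Fin n) : F :=
  if b p < t then dg (f := f) p (w t) else dg (f := f) (w 1) (w t) - dg (f := f) (w 1) p

variable (b f) in
/-- the inner-derivation matrix -/
noncomputable def XX (w : ℕ → Fin n) : Matrix (Fin n) (Fin n) F :=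
  Matrix.of fun p q =>
    if p = q then rho b f (t := t) w p
    else if b p ≤ b q then
      (if b q < t then cc f q (w (b q + 1)) p (w (b q + 1))
       else if 2 ≤ b p then -(cc f (w (b p - 1)) p (w (b p - 1)) q) else 0)
    else 0

variable {w : ℕ → Fin n}

lemma XX_diag (p : Fin n) : XX b f (t := t) w p p = rho b f (t := t) w p := if_pos rfl

lemma XX_lower {p q : Fin n} (h : b q < b p) : XX b f (t := t) w p q = 0 := by
  unfold XX
  rw [Matrix.of_apply, if_neg (fun hh : p = q => by rw [hh] at h; omega), if_neg (by omega)]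

lemma XX_off {p q : Fin n} (hpq : p ≠ q) (hle : b p ≤ b q) (hlt : b q < t) :
    XX b f (t := t) w p q = cc f q (w (b q + 1)) p (w (b q + 1)) := by
  unfold XX
  rw [Matrix.of_apply, if_neg hpq, if_pos hle, if_pos hlt]

lemma XX_top {p q : Fin n} (hpq : p ≠ q) (hle : b p ≤ b q) (hlt : ¬ (b q < t))
    (h2 : 2 ≤ b p) : XX b f (t := t) w p q = -(cc f (w (b p - 1)) p (w (b p - 1)) q) := by
  unfold XX
  rw [Matrix.of_apply, if_neg hpq, if_pos hle, if_neg hlt, if_pos h2]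

end XX

section G

variable {f : Matrix (Fin n) (Fin n) F →ₗ[F] Matrix (Fin n) (Fin n) F}
variable {w : ℕ → Fin n}

/-- G1 : row entries of `f(E r s)` give the right X-action -/
lemma G1 (hf : IsDerN b f) (ht : 3 ≤ t) (hub : ∀ r, b r ≤ t)
    (hw : ∀ k, 1 ≤ k → k ≤ t → b (w k) = k)
    {r s q : Fin n} (hadj : b s = b r + 1) (hr1 : 1 ≤ b r) (hst : b s ≤ t)
    (hqs : q ≠ s) (hq : b r < b q) (hex : ¬(b r = 1 ∧ b q = t)) :
    cc f r s r q = -(XX b f (t := t) w s q) := by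
  have hrs : b r < b s := by omega
  have hqt : b q ≤ t := hub q
  by_cases hqlt : b q < t
  · -- generic column case
    set v := w (b q + 1) with hv
    have hbv : b v = b q + 1 := hw _ (by omega) (by omega)
    have H := colL hf hrs (show b q < b v by omega)
      (show v ≠ r from fun h => by rw [h] at hbv; omega)
      (show v ≠ s from fun h => by rw [h] at hbv; omega)
      (show s ≠ q from fun h => hqs h.symm) r
    rw [if_pos rfl] at H
    rw [XX_off (show s ≠ q from fun h => hqs h.symm) (by omega) hqlt]
    exact H
  · -- top column case, b q = t, b r ≥ 2
    have hbq : b q = t := by omega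
    have hr2 : 2 ≤ b r := by
      by_contra h
      exact hex ⟨by omega, hbq⟩
    set x := w (b r - 1) with hx
    set x2 := w (b r) with hx2
    have hbx : b x = b r - 1 := hw _ (by omega) (by omega)
    have hbx2 : b x2 = b r := hw _ (by omega) (by omega)
    have S1 : cc f x s x q = cc f r s r q :=
      rowTransfer hf (by omega) hrs hqs (show q ≠ r from fun h => by rw [h] at hbq; omega)
    have S2 : cc f x s x q = cc f x2 s x2 q :=
      rowTransfer hf (by omega) (by omega) hqs
        (show q ≠ x2 from fun h => by rw [h, hbx2] at hbq; omega)
    rw [XX_top (show s ≠ q from fun h => by rw [h, hbq] at hadj; omega) (by omega) hqlt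
      (by omega)]
    have hss : b s - 1 = b r := by omega
    rw [hss, neg_neg, ← hx2, ← S2, S1]

/-- G2 : column entries of `f(E r s)` give the right X-action -/
lemma G2 (hf : IsDerN b f) (ht : 3 ≤ t) (hub : ∀ r, b r ≤ t) (hlb : ∀ r, 1 ≤ b r)
    (hw : ∀ k, 1 ≤ k → k ≤ t → b (w k) = k)
    {r s p : Fin n} (hadj : b s = b r + 1) (hr1 : 1 ≤ b r) (hst : b s ≤ t)
    (hpr : p ≠ r) (hp : b p < b s) (hex : ¬(b p = 1 ∧ b s = t)) :
    cc f r s p s = XX b f (t := t) w p r := by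
  have hrs : b r < b s := by omega
  have hwr : b (w (b r + 1)) = b r + 1 := hw _ (by omega) (by omega)
  by_cases hp2 : 2 ≤ b p
  · set u := w (b p - 1) with hu
    have hbu : b u = b p - 1 := hw _ (by omega) (by omega)
    have H1 := rowL hf hrs (show b u < b p by omega)
      (show u ≠ r from fun h => by rw [h] at hbu; omega)
      (show u ≠ s from fun h => by rw [h] at hbu; omega) hpr s
    rw [if_pos rfl] at H1
    have H2 := rowL hf (show b r < b (w (b r + 1)) by omega) (show b u < b p by omega)
      (show u ≠ r from fun h => by rw [h] at hbu; omega)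
      (show u ≠ w (b r + 1) from fun h => by rw [h, hwr] at hbu; omega) hpr (w (b r + 1))
    rw [if_pos rfl] at H2
    rw [XX_off hpr (by omega) (by omega), H1, H2]
  · -- b p = 1, b s < t
    have hp1 : b p = 1 := by have := hlb p; omega
    have hst2 : b s < t := by
      rcases Nat.lt_or_ge (b s) t with h | h; · exact h
      · exfalso; exact hex ⟨hp1, by omega⟩
    set y := w (b s + 1) with hy
    have hby : b y = b s + 1 := hw _ (by omega) (by omega)
    have T1 : cc f r s p s = cc f r y p y :=
      colTransfer hf hrs (by omega) hpr (show p ≠ s from fun h => by rw [h] at hp1; omega)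
    have T2 : cc f r (w (b r + 1)) p (w (b r + 1)) = cc f r y p y := by
      have : b (w (b r + 1)) = b s := by omega
      exact colTransfer hf (by omega) (by omega) hpr
        (show p ≠ w (b r + 1) from fun h => by rw [h] at hp1; omega)
    rw [XX_off hpr (by omega) (by omega), T1, T2]

/-- G3 : diagonal entries -/
lemma G3 (hf : IsDerN b f) (ht : 3 ≤ t)
    (hw : ∀ k, 1 ≤ k → k ≤ t → b (w k) = k)
    {r s : Fin n} (hrs : b r < b s) (hr1 : 1 ≤ b r) (hst : b s ≤ t) :
    dg (f := f) r s = rho b f (t := t) w r - rho b f (t := t) w s := by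
  have hwt : b (w t) = t := hw t (by omega) le_rfl
  have hw1 : b (w 1) = 1 := hw 1 le_rfl (by omega)
  have hw2 : b (w 2) = 2 := hw 2 (by omega) (by omega)
  have hrt : b r < t := by omega
  rw [rho, if_pos hrt]
  by_cases hst2 : b s < t
  · rw [rho, if_pos hst2]
    have := dg_add hf hrs (show b s < b (w t) by omega)
    linear_combination -this
  · have hbs : b s = t := by omega
    rw [rho, if_neg hst2]
    by_cases h1r : 1 < b r
    · have e1 := dg_add hf (show b (w 1) < b r by omega) hrs
      have e2 := dg_add hf (show b (w 1) < b r by omega) (show b r < b (w t) by omega)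
      linear_combination e2 - e1
    · have hbr : b r = 1 := by omega
      have e1 := dg_add hf (show b r < b (w 2) by omega) (show b (w 2) < b s by omega)
      have e2 := dg_add hf (show b r < b (w 2) by omega) (show b (w 2) < b (w t) by omega)
      have e3 := dg_add hf (show b (w 1) < b (w 2) by omega) (show b (w 2) < b s by omega)
      have e4 := dg_add hf (show b (w 1) < b (w 2) by omega) (show b (w 2) < b (w t) by omega)
      linear_combination e1 - e2 + e4 - e3

/-- G4 : all other entries vanish -/
lemma G4 (hf : IsDerN b f) (ht : 3 ≤ t) (hub : ∀ r, b r ≤ t) (hlb : ∀ r, 1 ≤ b r)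
    (hw : ∀ k, 1 ≤ k → k ≤ t → b (w k) = k)
    {r s p q : Fin n} (hadj : b s = b r + 1) (hr1 : 1 ≤ b r) (hst : b s ≤ t)
    (hpr : p ≠ r) (hqs : q ≠ s) (hpq : b p < b q)
    (hex1 : ¬(b p = 1 ∧ b q = t))
    (hex2 : ¬(b r = 1 ∧ b q = t ∧ (b p = 2 ∨ b p = 3)))
    (hex3 : ¬(b s = t ∧ b p = 1 ∧ (b q = t - 1 ∨ b q = t - 2))) :
    cc f r s p q = 0 := by
  have hrs : b r < b s := by omega
  by_cases hU : ∃ u, b u < b p ∧ u ≠ r ∧ u ≠ s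
  · obtain ⟨u, hu1, hu2, hu3⟩ := hU
    have H := rowL hf hrs hu1 hu2 hu3 hpr q
    rw [if_neg hqs] at H
    rw [H, neg_zero]
  by_cases hV : ∃ v, b q < b v ∧ v ≠ r ∧ v ≠ s
  · obtain ⟨v, hv1, hv2, hv3⟩ := hV
    have H := colL hf hrs hv1 hv2 hv3 (fun h => hqs h.symm) p
    rw [if_neg hpr] at H
    rw [H, neg_zero]
  · exfalso
    push_neg at hU hV
    -- claim on rows
    have hq_le : b q ≤ t := hub q
    have C1 : b p = 1 ∨ (b r = 1 ∧ (b p = 2 ∨ b p = 3)) := by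
      by_cases h2 : 2 ≤ b p
      · have hw1 : b (w 1) = 1 := hw 1 le_rfl (by omega)
        have h1 := hU (w 1) (by omega)
        have hbr1 : b r = 1 := by
          rcases Decidable.em (w 1 = r) with h | h
          · rw [← h]; exact hw1
          · exfalso; have := h1 h; rw [this] at hw1; omega
        by_cases h3 : 3 ≤ b p
        · have hw2 : b (w 2) = 2 := hw 2 (by omega) (by omega)
          have h2' := hU (w 2) (by omega)
          have hbs2 : b s = 2 := by omega
          by_cases h4 : 4 ≤ b p
          · have hw3 : b (w 3) = 3 := hw 3 (by omega) (by omega)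
            have h3' := hU (w 3) (by omega)
            rcases Decidable.em (w 3 = r) with h | h
            · rw [h] at hw3; omega
            · have := h3' h; rw [this] at hw3; omega
          · right; exact ⟨hbr1, Or.inr (by omega)⟩
        · right; exact ⟨hbr1, Or.inl (by omega)⟩
      · left; have := hlb p; omega
    have C2 : b q = t ∨ (b s = t ∧ (b q = t - 1 ∨ b q = t - 2)) := by
      by_cases h2 : b q ≤ t - 1
      · have hwt : b (w t) = t := hw t (by omega) le_rfl
        have h1 := hV (w t) (by omega)
        have hbst : b s = t := by
          rcases Decidable.em (w t = r) with h | h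
          · exfalso; rw [h] at hwt; omega
          · have := h1 h; rw [← this]; exact hwt
        by_cases h3 : b q ≤ t - 2
        · have hwt1 : b (w (t-1)) = t - 1 := hw (t-1) (by omega) (by omega)
          have h2' := hV (w (t-1)) (by omega)
          have hbrt : b r = t - 1 := by
            rcases Decidable.em (w (t-1) = r) with h | h
            · rw [← h]; exact hwt1
            · have := h2' h; rw [this] at hwt1; omega
          by_cases h4 : b q ≤ t - 3
          · have hwt2 : b (w (t-2)) = t - 2 := hw (t-2) (by omega) (by omega)
            have h3' := hV (w (t-2)) (by omega)
            rcases Decidable.em (w (t-2) = r) with h | h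
            · rw [h] at hwt2; omega
            · have := h3' h; rw [this] at hwt2; omega
          · right; exact ⟨hbst, Or.inr (by omega)⟩
        · right; exact ⟨hbst, Or.inl (by omega)⟩
      · left; omega
    rcases C1 with hp1 | ⟨hbr1, hp23⟩
    · rcases C2 with hqt | ⟨hbst, hq12⟩
      · exact hex1 ⟨hp1, hqt⟩
      · exact hex3 ⟨hbst, hp1, hq12⟩
    · rcases C2 with hqt | ⟨hbst, _⟩
      · exact hex2 ⟨hbr1, hqt, hp23⟩
      · omega

end G


section pieces

variable (b f) in
/-- the inner derivation `ad X` -/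
noncomputable def XL (w : ℕ → Fin n) :
    Matrix (Fin n) (Fin n) F →ₗ[F] Matrix (Fin n) (Fin n) F :=
  LinearMap.mulLeft F (XX b f (t := t) w) - LinearMap.mulRight F (XX b f (t := t) w)

variable (b f) in
noncomputable def Phi (w : ℕ → Fin n) :
    Matrix (Fin n) (Fin n) F →ₗ[F] Matrix (Fin n) (Fin n) F :=
  blkP b 1 t ∘ₗ (f - XL b f (t := t) w) ∘ₗ adjP b

variable (b f) in
noncomputable def Phi1 : Matrix (Fin n) (Fin n) F →ₗ[F] Matrix (Fin n) (Fin n) F :=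
  blkP b 2 t ∘ₗ f ∘ₗ blkP b 1 2

variable (b f) in
noncomputable def Psi1 : Matrix (Fin n) (Fin n) F →ₗ[F] Matrix (Fin n) (Fin n) F :=
  blkP b 3 t ∘ₗ f ∘ₗ blkP b 1 2 + blkP b 2 t ∘ₗ f ∘ₗ blkP b 1 3

variable (b f) in
noncomputable def Phi2 : Matrix (Fin n) (Fin n) F →ₗ[F] Matrix (Fin n) (Fin n) F :=
  blkP b 1 (t-1) ∘ₗ f ∘ₗ blkP b (t-1) t

variable (b f) in
noncomputable def Psi2 : Matrix (Fin n) (Fin n) F →ₗ[F] Matrix (Fin n) (Fin n) F :=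
  blkP b 1 (t-2) ∘ₗ f ∘ₗ blkP b (t-1) t + blkP b 1 (t-1) ∘ₗ f ∘ₗ blkP b (t-2) t

variable {w : ℕ → Fin n}

lemma XL_apply (M : Matrix (Fin n) (Fin n) F) :
    XL b f (t := t) w M = XX b f (t := t) w * M - M * XX b f (t := t) w := rfl

lemma XL_E (r s p q : Fin n) :
    XL b f (t := t) w (E r s) p q
      = (if q = s then XX b f (t := t) w p r else 0)
        - (if p = r then XX b f (t := t) w s q else 0) := by
  rw [XL_apply, Matrix.sub_apply, mul_E_apply, E_mul_apply]

lemma blkP_E (k l : ℕ) (r s : Fin n) :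
    blkP b k l (E (F := F) r s) = if b r = k ∧ b s = l then E (F := F) r s else 0 := by
  ext p q
  rw [blkP_apply]
  by_cases h : b r = k ∧ b s = l
  · rw [if_pos h]
    by_cases h2 : p = r ∧ q = s
    · obtain ⟨rfl, rfl⟩ := h2
      rw [if_pos h]
    · rw [E_apply, if_neg h2, ite_self]
  · rw [if_neg h]
    by_cases h2 : b p = k ∧ b q = l
    · rw [if_pos h2, Matrix.zero_apply, E_apply, if_neg]
      rintro ⟨rfl, rfl⟩
      exact h h2
    · rw [if_neg h2, Matrix.zero_apply]

lemma adjP_E {r s : Fin n} (hadj : b s = b r + 1) : adjP b (E (F := F) r s) = E r s := by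
  ext p q
  rw [adjP_apply]
  split
  · rfl
  · next h =>
    rw [E_apply, if_neg]
    rintro ⟨rfl, rfl⟩
    exact h hadj

lemma proj_f_proj_E (k l k' l' : ℕ) (r s p q : Fin n) :
    (blkP b k' l' ∘ₗ f ∘ₗ blkP b k l) (E r s) p q
      = if b p = k' ∧ b q = l' then
          (if b r = k ∧ b s = l then cc f r s p q else 0) else 0 := by
  rw [LinearMap.comp_apply, LinearMap.comp_apply, blkP_E, apply_ite f, map_zero, blkP_apply]
  by_cases h : b p = k' ∧ b q = l'
  · rw [if_pos h, if_pos h]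
    by_cases h2 : b r = k ∧ b s = l
    · rw [if_pos h2, if_pos h2, cc]
    · rw [if_neg h2, if_neg h2, Matrix.zero_apply]
  · rw [if_neg h, if_neg h]

lemma Phi_E {r s : Fin n} (hadj : b s = b r + 1) (p q : Fin n) :
    Phi b f (t := t) w (E r s) p q
      = if b p = 1 ∧ b q = t then
          cc f r s p q - ((if q = s then XX b f (t := t) w p r else 0)
            - (if p = r then XX b f (t := t) w s q else 0)) else 0 := by
  rw [Phi, LinearMap.comp_apply, LinearMap.comp_apply, adjP_E hadj, LinearMap.sub_apply,
    blkP_apply]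
  by_cases h : b p = 1 ∧ b q = t
  · rw [if_pos h, if_pos h, Matrix.sub_apply, XL_E, cc]
  · rw [if_neg h, if_neg h]

lemma Phi1_E (r s p q : Fin n) :
    Phi1 b f (t := t) (E r s) p q
      = if b p = 2 ∧ b q = t then (if b r = 1 ∧ b s = 2 then cc f r s p q else 0) else 0 :=
  proj_f_proj_E 1 2 2 t r s p q

lemma Psi1_E (r s p q : Fin n) :
    Psi1 b f (t := t) (E r s) p q
      = (if b p = 3 ∧ b q = t then (if b r = 1 ∧ b s = 2 then cc f r s p q else 0) else 0)
        + (if b p = 2 ∧ b q = t then (if b r = 1 ∧ b s = 3 then cc f r s p q else 0) else 0) := by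
  rw [Psi1, LinearMap.add_apply, Matrix.add_apply, proj_f_proj_E, proj_f_proj_E]

lemma Phi2_E (r s p q : Fin n) :
    Phi2 b f (t := t) (E r s) p q
      = if b p = 1 ∧ b q = t - 1 then
          (if b r = t - 1 ∧ b s = t then cc f r s p q else 0) else 0 :=
  proj_f_proj_E (t-1) t 1 (t-1) r s p q

lemma Psi2_E (r s p q : Fin n) :
    Psi2 b f (t := t) (E r s) p q
      = (if b p = 1 ∧ b q = t - 2 then (if b r = t - 1 ∧ b s = t then cc f r s p q else 0) else 0)
        + (if b p = 1 ∧ b q = t - 1 then (if b r = t - 2 ∧ b s = t then cc f r s p q else 0) else 0) := by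
  rw [Psi2, LinearMap.add_apply, Matrix.add_apply, proj_f_proj_E, proj_f_proj_E]

end pieces


section key

variable {f : Matrix (Fin n) (Fin n) F →ₗ[F] Matrix (Fin n) (Fin n) F}
variable {w : ℕ → Fin n}

/-- KEY: on adjacent matrix units, `f` equals the candidate decomposition. -/
lemma KEY (hf : IsDerN b f) (ht : 3 ≤ t) (hub : ∀ r, b r ≤ t) (hlb : ∀ r, 1 ≤ b r)
    (hw : ∀ k, 1 ≤ k → k ≤ t → b (w k) = k)
    {r s : Fin n} (hadj : b s = b r + 1) (hr1 : 1 ≤ b r) (hst : b s ≤ t) :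
    f (E r s) = XL b f (t := t) w (E r s) + Phi b f (t := t) w (E r s)
      + Phi1 b f (t := t) (E r s) + Phi2 b f (t := t) (E r s)
      + Psi1 b f (t := t) (E r s) + Psi2 b f (t := t) (E r s) := by
  have hrs : b r < b s := by omega
  ext p q
  rw [Matrix.add_apply, Matrix.add_apply, Matrix.add_apply, Matrix.add_apply,
    Matrix.add_apply, XL_E, Phi_E hadj, Phi1_E, Phi2_E, Psi1_E, Psi2_E]
  rw [show f (E r s) p q = cc f r s p q from rfl]
  by_cases hpq : b p < b q
  · by_cases h1t : b p = 1 ∧ b q = t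
    · rw [if_pos h1t,
        if_neg (show ¬(b p = 2 ∧ b q = t) by rintro ⟨a1, _⟩; omega),
        if_neg (show ¬(b p = 1 ∧ b q = t - 1) by rintro ⟨_, a2⟩; omega),
        if_neg (show ¬(b p = 3 ∧ b q = t) by rintro ⟨a1, _⟩; omega),
        if_neg (show ¬(b p = 2 ∧ b q = t) by rintro ⟨a1, _⟩; omega),
        if_neg (show ¬(b p = 1 ∧ b q = t - 2) by rintro ⟨_, a2⟩; omega),
        if_neg (show ¬(b p = 1 ∧ b q = t - 1) by rintro ⟨_, a2⟩; omega)]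
      try simp only [ite_self]
      ring
    · by_cases hx1 : b r = 1 ∧ b p = 2 ∧ b q = t
      · have e1 : (if q = s then XX b f (t := t) w p r else 0) = 0 := by
          split
          · next h => exact absurd (congrArg b h) (by omega)
          · rfl
        have e2 : (if p = r then XX b f (t := t) w s q else 0) = 0 := by
          split
          · next h => exact absurd (congrArg b h) (by omega)
          · rfl
        rw [e1, e2, if_neg h1t,
          if_pos (show b p = 2 ∧ b q = t from ⟨hx1.2.1, hx1.2.2⟩),
          if_pos (show b r = 1 ∧ b s = 2 from ⟨hx1.1, by omega⟩),
          if_neg (show ¬(b p = 1 ∧ b q = t - 1) by rintro ⟨a1, _⟩; omega),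
          if_neg (show ¬(b p = 3 ∧ b q = t) by rintro ⟨a1, _⟩; omega),
          if_neg (show ¬(b r = 1 ∧ b s = 3) by rintro ⟨_, a2⟩; omega),
          if_neg (show ¬(b p = 1 ∧ b q = t - 2) by rintro ⟨a1, _⟩; omega),
          if_neg (show ¬(b p = 1 ∧ b q = t - 1) by rintro ⟨a1, _⟩; omega)]
        try simp only [ite_self]
        ring
      · by_cases hx2 : b r = 1 ∧ b p = 3 ∧ b q = t
        · have e1 : (if q = s then XX b f (t := t) w p r else 0) = 0 := by
            split
            · next h => exact absurd (congrArg b h) (by omega)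
            · rfl
          have e2 : (if p = r then XX b f (t := t) w s q else 0) = 0 := by
            split
            · next h => exact absurd (congrArg b h) (by omega)
            · rfl
          rw [e1, e2, if_neg h1t,
            if_neg (show ¬(b p = 2 ∧ b q = t) by rintro ⟨a1, _⟩; omega),
            if_neg (show ¬(b p = 1 ∧ b q = t - 1) by rintro ⟨a1, _⟩; omega),
            if_pos (show b p = 3 ∧ b q = t from ⟨hx2.2.1, hx2.2.2⟩),
            if_pos (show b r = 1 ∧ b s = 2 from ⟨hx2.1, by omega⟩),
            if_neg (show ¬(b p = 2 ∧ b q = t) by rintro ⟨a1, _⟩; omega),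
            if_neg (show ¬(b p = 1 ∧ b q = t - 2) by rintro ⟨a1, _⟩; omega),
            if_neg (show ¬(b p = 1 ∧ b q = t - 1) by rintro ⟨a1, _⟩; omega)]
          try simp only [ite_self]
          ring
        · by_cases hx3 : b s = t ∧ b p = 1 ∧ b q = t - 1
          · have e1 : (if q = s then XX b f (t := t) w p r else 0) = 0 := by
              split
              · next h => exact absurd (congrArg b h) (by omega)
              · rfl
            have e2 : (if p = r then XX b f (t := t) w s q else 0) = 0 := by
              split
              · next h => exact absurd (congrArg b h) (by omega)
              · rfl
            rw [e1, e2,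
              if_neg (show ¬(b p = 1 ∧ b q = t) by rintro ⟨_, a2⟩; omega),
              if_neg (show ¬(b p = 2 ∧ b q = t) by rintro ⟨a1, _⟩; omega),
              if_pos (show b p = 1 ∧ b q = t - 1 from ⟨hx3.2.1, hx3.2.2⟩),
              if_pos (show b r = t - 1 ∧ b s = t from ⟨by omega, hx3.1⟩),
              if_neg (show ¬(b p = 3 ∧ b q = t) by rintro ⟨a1, _⟩; omega),
              if_neg (show ¬(b p = 2 ∧ b q = t) by rintro ⟨a1, _⟩; omega),
              if_neg (show ¬(b p = 1 ∧ b q = t - 2) by rintro ⟨_, a2⟩; omega),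
              if_pos (show b p = 1 ∧ b q = t - 1 from ⟨hx3.2.1, hx3.2.2⟩),
              if_neg (show ¬(b r = t - 2 ∧ b s = t) by rintro ⟨a1, _⟩; omega)]
            try simp only [ite_self]
            ring
          · by_cases hx4 : b s = t ∧ b p = 1 ∧ b q = t - 2
            · have e1 : (if q = s then XX b f (t := t) w p r else 0) = 0 := by
                split
                · next h => exact absurd (congrArg b h) (by omega)
                · rfl
              have e2 : (if p = r then XX b f (t := t) w s q else 0) = 0 := by
                split
                · next h => exact absurd (congrArg b h) (by omega)
                · rfl
              rw [e1, e2,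
                if_neg (show ¬(b p = 1 ∧ b q = t) by rintro ⟨_, a2⟩; omega),
                if_neg (show ¬(b p = 2 ∧ b q = t) by rintro ⟨a1, _⟩; omega),
                if_neg (show ¬(b p = 1 ∧ b q = t - 1) by rintro ⟨_, a2⟩; omega),
                if_neg (show ¬(b p = 3 ∧ b q = t) by rintro ⟨a1, _⟩; omega),
                if_neg (show ¬(b p = 2 ∧ b q = t) by rintro ⟨a1, _⟩; omega),
                if_pos (show b p = 1 ∧ b q = t - 2 from ⟨hx4.2.1, hx4.2.2⟩),
                if_pos (show b r = t - 1 ∧ b s = t from ⟨by omega, hx4.1⟩),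
                if_neg (show ¬(b p = 1 ∧ b q = t - 1) by rintro ⟨_, a2⟩; omega)]
              try simp only [ite_self]
              ring
            · have E1 : (if b p = 2 ∧ b q = t then
                  (if b r = 1 ∧ b s = 2 then cc f r s p q else 0) else 0) = 0 := by
                split
                · next h =>
                  rw [if_neg (show ¬(b r = 1 ∧ b s = 2) by
                    rintro ⟨a1, _⟩; exact hx1 ⟨a1, h.1, h.2⟩)]
                · rfl
              have E2 : (if b p = 1 ∧ b q = t - 1 then
                  (if b r = t - 1 ∧ b s = t then cc f r s p q else 0) else 0) = 0 := by
                split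
                · next h =>
                  rw [if_neg (show ¬(b r = t - 1 ∧ b s = t) by
                    rintro ⟨_, a2⟩; exact hx3 ⟨a2, h.1, h.2⟩)]
                · rfl
              have E3 : (if b p = 3 ∧ b q = t then
                  (if b r = 1 ∧ b s = 2 then cc f r s p q else 0) else 0) = 0 := by
                split
                · next h =>
                  rw [if_neg (show ¬(b r = 1 ∧ b s = 2) by
                    rintro ⟨a1, _⟩; exact hx2 ⟨a1, h.1, h.2⟩)]
                · rfl
              have E4 : (if b p = 2 ∧ b q = t then
                  (if b r = 1 ∧ b s = 3 then cc f r s p q else 0) else 0) = 0 := by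
                split
                · next h =>
                  rw [if_neg (show ¬(b r = 1 ∧ b s = 3) by rintro ⟨a1, a2⟩; omega)]
                · rfl
              have E5 : (if b p = 1 ∧ b q = t - 2 then
                  (if b r = t - 1 ∧ b s = t then cc f r s p q else 0) else 0) = 0 := by
                split
                · next h =>
                  rw [if_neg (show ¬(b r = t - 1 ∧ b s = t) by
                    rintro ⟨_, a2⟩; exact hx4 ⟨a2, h.1, h.2⟩)]
                · rfl
              have E6 : (if b p = 1 ∧ b q = t - 1 then
                  (if b r = t - 2 ∧ b s = t then cc f r s p q else 0) else 0) = 0 := by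
                split
                · next h =>
                  rw [if_neg (show ¬(b r = t - 2 ∧ b s = t) by rintro ⟨a1, a2⟩; omega)]
                · rfl
              rw [if_neg h1t, E1, E2, E3, E4, E5, E6]
              by_cases hqs : q = s
              · subst hqs
                by_cases hpr : p = r
                · subst hpr
                  rw [if_pos rfl, if_pos rfl, XX_diag, XX_diag]
                  have h3 := G3 hf ht hw hrs hr1 hst
                  unfold dg at h3
                  rw [h3]
                  ring
                · rw [if_pos rfl, if_neg hpr]
                  have h2 := G2 hf ht hub hlb hw hadj hr1 hst hpr (by omega)
                    (by rintro ⟨a1, a2⟩; exact h1t ⟨a1, by omega⟩)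
                  rw [h2]
                  ring
              · by_cases hpr : p = r
                · subst hpr
                  rw [if_neg hqs, if_pos rfl]
                  have h11 := G1 hf ht hub hw hadj hr1 hst hqs (by omega)
                    (by rintro ⟨a1, a2⟩; exact h1t ⟨a1, a2⟩)
                  rw [h11]
                  ring
                · rw [if_neg hqs, if_neg hpr]
                  have h4 := G4 hf ht hub hlb hw hadj hr1 hst hpr hqs hpq h1t
                    (by rintro ⟨a1, a2, a3⟩
                        rcases a3 with a3 | a3
                        · exact hx1 ⟨a1, a3, a2⟩
                        · exact hx2 ⟨a1, a3, a2⟩)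
                    (by rintro ⟨a1, a2, a3⟩
                        rcases a3 with a3 | a3
                        · exact hx3 ⟨a1, a2, a3⟩
                        · exact hx4 ⟨a1, a2, a3⟩)
                  rw [h4]
                  ring
  · have hc : cc f r s p q = 0 := cc_inN hf hrs (by omega)
    have e1 : (if q = s then XX b f (t := t) w p r else 0) = 0 := by
      split
      · next h =>
        have hb : b q = b s := congrArg b h
        exact XX_lower (by omega)
      · rfl
    have e2 : (if p = r then XX b f (t := t) w s q else 0) = 0 := by
      split
      · next h =>
        have hb : b p = b r := congrArg b h
        exact XX_lower (by omega)
      · rfl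
    rw [hc, e1, e2,
      if_neg (show ¬(b p = 1 ∧ b q = t) by rintro ⟨a1, a2⟩; omega)]
    try simp only [ite_self]
    ring

end key


section identities

variable {f : Matrix (Fin n) (Fin n) F →ₗ[F] Matrix (Fin n) (Fin n) F}

lemma inN_of_inBlk {i j : ℕ} {A : Matrix (Fin n) (Fin n) F} (h : i < j)
    (hA : InBlk b i j A) : InN b A := fun r s hle => hA r s (by rintro ⟨h1, h2⟩; omega)

/-- rows of `M` in the row-block of `C` clash with `InN`. -/
lemma blkP_row_clash {k j l : ℕ} {C M : Matrix (Fin n) (Fin n) F} (hC : InBlk b k j C)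
    (hM : InN b M) : blkP b k l (M * C) = 0 := by
  ext p s
  rw [blkP_apply, Matrix.zero_apply]
  split
  · next h =>
    rw [Matrix.mul_apply]
    refine Finset.sum_eq_zero fun u _ => ?_
    by_cases hu : b u = k
    · rw [hM p u (by omega), zero_mul]
    · rw [hC u s (by tauto), mul_zero]
  · rfl

lemma blkP_col_clash {i j k : ℕ} {C M : Matrix (Fin n) (Fin n) F} (hC : InBlk b i j C)
    (hM : InN b M) : blkP b k j (C * M) = 0 := by
  ext p s
  rw [blkP_apply, Matrix.zero_apply]
  split
  · next h =>
    rw [Matrix.mul_apply]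
    refine Finset.sum_eq_zero fun u _ => ?_
    by_cases hu : b u = j
    · rw [hM u s (by omega), mul_zero]
    · rw [hC p u (by tauto), zero_mul]
  · rfl

/-- SYM1 -/
lemma SYM1 (hf : IsDerN b f) (ht : 3 ≤ t)
    {A B : Matrix (Fin n) (Fin n) F} (hA : InBlk b 1 2 A) (hB : InBlk b 1 2 B) :
    A * blkP b 2 t (f B) = B * blkP b 2 t (f A) := by
  have H := hf.2 A B (inN_of_inBlk (by omega) hA) (inN_of_inBlk (by omega) hB)
  rw [mul_blk_zero hA hB (by omega), mul_blk_zero hB hA (by omega), sub_zero, map_zero] at H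
  have H2 := congrArg (fun M => blkP b 1 t M) H.symm
  simp only [map_add, map_sub, map_zero] at H2
  rw [blkP_mul_right_ne hB _ (by omega), blkP_mul_left hB, blkP_mul_left hA,
    blkP_mul_right_ne hA _ (by omega), zero_sub, sub_zero] at H2
  exact eq_of_sub_eq_zero (by rw [sub_eq_neg_add]; exact H2)

/-- C1 -/
lemma C1 (hf : IsDerN b f) (ht : 3 ≤ t)
    {A C : Matrix (Fin n) (Fin n) F} (hA : InBlk b 1 2 A) (hC : InBlk b 2 3 C) :
    blkP b 2 t (f (A * C)) = -(C * blkP b 3 t (f A)) := by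
  have H := hf.2 A C (inN_of_inBlk (by omega) hA) (inN_of_inBlk (by omega) hC)
  rw [mul_blk_zero hC hA (by omega), sub_zero] at H
  have H2 := congrArg (fun M => blkP b 2 t M) H
  simp only [map_add, map_sub] at H2
  rw [blkP_row_clash hC (hf.1 A (inN_of_inBlk (by omega) hA)),
    blkP_mul_left hC, blkP_mul_left_ne hA _ (by omega),
    blkP_mul_right_ne hA _ (by omega), zero_sub, zero_sub] at H2
  simpa using H2

/-- C2' -/
lemma C2' (hf : IsDerN b f) (ht : 3 ≤ t) (hlb : ∀ r, 1 ≤ b r)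
    {A B : Matrix (Fin n) (Fin n) F} (hA : InBlk b 1 2 A) (hB : InBlk b 1 3 B) :
    A * blkP b 2 t (f B) = B * blkP b 3 t (f A) := by
  have H := hf.2 A B (inN_of_inBlk (by omega) hA) (inN_of_inBlk (by omega) hB)
  rw [mul_blk_zero hA hB (by omega), mul_blk_zero hB hA (by omega), sub_zero, map_zero] at H
  have H2 := congrArg (fun M => blkP b 1 t M) H.symm
  simp only [map_add, map_sub, map_zero] at H2
  rw [inN_mul_bot hlb hB (hf.1 A (inN_of_inBlk (by omega) hA)),
    inN_mul_bot hlb hA (hf.1 B (inN_of_inBlk (by omega) hB)),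
    map_zero, blkP_mul_left hB, blkP_mul_left hA, zero_sub, sub_zero] at H2
  exact eq_of_sub_eq_zero (by rw [sub_eq_neg_add]; exact H2)

/-- SYM2 -/
lemma SYM2 (hf : IsDerN b f) (ht : 3 ≤ t) (hub : ∀ r, b r ≤ t)
    {A B : Matrix (Fin n) (Fin n) F} (hA : InBlk b (t-1) t A) (hB : InBlk b (t-1) t B) :
    blkP b 1 (t-1) (f A) * B = blkP b 1 (t-1) (f B) * A := by
  have H := hf.2 A B (inN_of_inBlk (by omega) hA) (inN_of_inBlk (by omega) hB)
  rw [mul_blk_zero hA hB (by omega), mul_blk_zero hB hA (by omega), sub_zero, map_zero] at H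
  have H2 := congrArg (fun M => blkP b 1 t M) H.symm
  simp only [map_add, map_sub, map_zero] at H2
  rw [top_mul_inN hub hB (hf.1 A (inN_of_inBlk (by omega) hA)),
    top_mul_inN hub hA (hf.1 B (inN_of_inBlk (by omega) hB)),
    map_zero, blkP_mul_right hB _ 1, blkP_mul_right hA _ 1, sub_zero, zero_sub] at H2
  exact eq_of_sub_eq_zero (by rw [sub_eq_add_neg]; exact H2)

/-- C1' -/
lemma C1' (hf : IsDerN b f) (ht : 3 ≤ t) (hub : ∀ r, b r ≤ t)
    {C A : Matrix (Fin n) (Fin n) F} (hC : InBlk b (t-2) (t-1) C) (hA : InBlk b (t-1) t A) :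
    blkP b 1 (t-1) (f (C * A)) = -(blkP b 1 (t-2) (f A) * C) := by
  have H := hf.2 C A (inN_of_inBlk (by omega) hC) (inN_of_inBlk (by omega) hA)
  rw [mul_blk_zero hA hC (by omega), sub_zero] at H
  have H2 := congrArg (fun M => blkP b 1 (t-1) M) H
  simp only [map_add, map_sub] at H2
  rw [blkP_mul_right_ne hA _ (by omega), blkP_mul_left_ne hA _ (by omega),
    blkP_col_clash hC (hf.1 A (inN_of_inBlk (by omega) hA)),
    blkP_mul_right hC, zero_sub, zero_sub] at H2
  simpa using H2

/-- C2'' -/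
lemma C2'' (hf : IsDerN b f) (ht : 3 ≤ t) (hub : ∀ r, b r ≤ t)
    {A B : Matrix (Fin n) (Fin n) F} (hA : InBlk b (t-1) t A) (hB : InBlk b (t-2) t B) :
    blkP b 1 (t-2) (f A) * B = blkP b 1 (t-1) (f B) * A := by
  have H := hf.2 A B (inN_of_inBlk (by omega) hA) (inN_of_inBlk (by omega) hB)
  rw [mul_blk_zero hA hB (by omega), mul_blk_zero hB hA (by omega), sub_zero, map_zero] at H
  have H2 := congrArg (fun M => blkP b 1 t M) H.symm
  simp only [map_add, map_sub, map_zero] at H2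
  rw [top_mul_inN hub hB (hf.1 A (inN_of_inBlk (by omega) hA)),
    top_mul_inN hub hA (hf.1 B (inN_of_inBlk (by omega) hB)),
    map_zero, blkP_mul_right hB _ 1, blkP_mul_right hA _ 1, sub_zero, zero_sub] at H2
  exact eq_of_sub_eq_zero (by rw [sub_eq_add_neg]; exact H2)

end identities


section leibniz

variable {f : Matrix (Fin n) (Fin n) F →ₗ[F] Matrix (Fin n) (Fin n) F}
variable {w : ℕ → Fin n}

lemma mul_blk2 (hlb : ∀ r, 1 ≤ b r) {l : ℕ} {W Y : Matrix (Fin n) (Fin n) F}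
    (hW : InBlk b 2 l W) (hY : InN b Y) : Y * W = blkP b 1 2 Y * W := by
  ext r s
  rw [Matrix.mul_apply, Matrix.mul_apply]
  refine Finset.sum_congr rfl fun u _ => ?_
  by_cases hw0 : b u = 2 ∧ b s = l
  · rw [blkP_apply]
    by_cases hr : b r = 1
    · rw [if_pos ⟨hr, hw0.1⟩]
    · rw [if_neg (by tauto), hY r u (by have := hlb r; omega), zero_mul]
  · rw [hW u s hw0, mul_zero, mul_zero]

lemma mul_blk3 (hlb : ∀ r, 1 ≤ b r) {l : ℕ} {W Y : Matrix (Fin n) (Fin n) F}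
    (hW : InBlk b 3 l W) (hY : InN b Y) :
    Y * W = blkP b 1 3 Y * W + blkP b 2 3 Y * W := by
  ext r s
  rw [Matrix.add_apply, Matrix.mul_apply, Matrix.mul_apply, Matrix.mul_apply,
    ← Finset.sum_add_distrib]
  refine Finset.sum_congr rfl fun u _ => ?_
  by_cases hw0 : b u = 3 ∧ b s = l
  · rw [blkP_apply, blkP_apply]
    by_cases hr1 : b r = 1
    · rw [if_pos ⟨hr1, hw0.1⟩, if_neg (by rintro ⟨h', _⟩; omega), zero_mul, add_zero]
    · by_cases hr2 : b r = 2
      · rw [if_neg (by rintro ⟨h', _⟩; omega), if_pos ⟨hr2, hw0.1⟩, zero_mul, zero_add]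
      · rw [if_neg (by rintro ⟨h', _⟩; omega), if_neg (by rintro ⟨h', _⟩; omega),
          hY r u (by have := hlb r; omega), zero_mul, add_zero]
  · rw [hW u s hw0, mul_zero, mul_zero, mul_zero, add_zero]

lemma mul_blkt1 (hub : ∀ r, b r ≤ t) {k : ℕ} {W Y : Matrix (Fin n) (Fin n) F}
    (hW : InBlk b k (t-1) W) (hY : InN b Y) : W * Y = W * blkP b (t-1) t Y := by
  ext r s
  rw [Matrix.mul_apply, Matrix.mul_apply]
  refine Finset.sum_congr rfl fun u _ => ?_
  by_cases hw0 : b r = k ∧ b u = t - 1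
  · rw [blkP_apply]
    by_cases hs : b s = t
    · rw [if_pos ⟨hw0.2, hs⟩]
    · rw [if_neg (by tauto), hY u s (by have := hub s; omega), mul_zero]
  · rw [hW r u hw0, zero_mul, zero_mul]

lemma mul_blkt2 (ht : 3 ≤ t) (hub : ∀ r, b r ≤ t) {k : ℕ} {W Y : Matrix (Fin n) (Fin n) F}
    (hW : InBlk b k (t-2) W) (hY : InN b Y) :
    W * Y = W * blkP b (t-2) (t-1) Y + W * blkP b (t-2) t Y := by
  ext r s
  rw [Matrix.add_apply, Matrix.mul_apply, Matrix.mul_apply, Matrix.mul_apply,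
    ← Finset.sum_add_distrib]
  refine Finset.sum_congr rfl fun u _ => ?_
  by_cases hw0 : b r = k ∧ b u = t - 2
  · rw [blkP_apply, blkP_apply]
    by_cases hs1 : b s = t - 1
    · rw [if_pos ⟨hw0.2, hs1⟩, if_neg (by rintro ⟨_, h'⟩; omega), mul_zero, add_zero]
    · by_cases hs2 : b s = t
      · rw [if_neg (by rintro ⟨_, h'⟩; omega), if_pos ⟨hw0.2, hs2⟩, mul_zero, zero_add]
      · rw [if_neg (by rintro ⟨_, h'⟩; omega), if_neg (by rintro ⟨_, h'⟩; omega),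
          hY u s (by have := hub s; omega), mul_zero, add_zero]
  · rw [hW r u hw0, zero_mul, zero_mul, zero_mul, add_zero]

lemma blkP_mul_adj_zero {k l : ℕ} (h : l ≤ k + 1) {X Y : Matrix (Fin n) (Fin n) F}
    (hX : InN b X) (hY : InN b Y) : blkP b k l (X * Y) = 0 := by
  ext r s
  rw [blkP_apply, Matrix.zero_apply]
  split
  · next h2 => exact mul_entry_far hX hY (by omega)
  · rfl

lemma XL_inN {A : Matrix (Fin n) (Fin n) F} (hA : InN b A) :
    InN b (XL b f (t := t) w A) := by
  intro r s h
  rw [XL_apply, Matrix.sub_apply]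
  have h1 : (XX b f (t := t) w * A) r s = 0 := by
    rw [Matrix.mul_apply]
    refine Finset.sum_eq_zero fun u _ => ?_
    by_cases hu : b u < b r
    · rw [XX_lower hu, zero_mul]
    · rw [hA u s (by omega), mul_zero]
  have h2 : (A * XX b f (t := t) w) r s = 0 := by
    rw [Matrix.mul_apply]
    refine Finset.sum_eq_zero fun u _ => ?_
    by_cases hu : b r < b u
    · rw [XX_lower (show b s < b u by omega), mul_zero]
    · rw [hA r u (by omega), zero_mul]
  rw [h1, h2, sub_zero]

lemma Phi_apply (M : Matrix (Fin n) (Fin n) F) :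
    Phi b f (t := t) w M
      = blkP b 1 t (f (adjP b M) - XL b f (t := t) w (adjP b M)) := rfl

lemma Phi1_apply (M : Matrix (Fin n) (Fin n) F) :
    Phi1 b f (t := t) M = blkP b 2 t (f (blkP b 1 2 M)) := rfl

lemma Psi1_apply (M : Matrix (Fin n) (Fin n) F) :
    Psi1 b f (t := t) M
      = blkP b 3 t (f (blkP b 1 2 M)) + blkP b 2 t (f (blkP b 1 3 M)) := rfl

lemma Phi2_apply (M : Matrix (Fin n) (Fin n) F) :
    Phi2 b f (t := t) M = blkP b 1 (t-1) (f (blkP b (t-1) t M)) := rfl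

lemma Psi2_apply (M : Matrix (Fin n) (Fin n) F) :
    Psi2 b f (t := t) M
      = blkP b 1 (t-2) (f (blkP b (t-1) t M)) + blkP b 1 (t-1) (f (blkP b (t-2) t M)) := rfl

lemma XL_leib (X Y : Matrix (Fin n) (Fin n) F) :
    XL b f (t := t) w (X * Y - Y * X)
      = (XL b f (t := t) w X * Y - Y * XL b f (t := t) w X)
        + (X * XL b f (t := t) w Y - XL b f (t := t) w Y * X) := by
  simp only [XL_apply]
  noncomm_ring

lemma Phi_leib (ht : 3 ≤ t) (hub : ∀ r, b r ≤ t) (hlb : ∀ r, 1 ≤ b r)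
    {X Y : Matrix (Fin n) (Fin n) F} (hX : InN b X) (hY : InN b Y) :
    Phi b f (t := t) w (X * Y - Y * X)
      = (Phi b f (t := t) w X * Y - Y * Phi b f (t := t) w X)
        + (X * Phi b f (t := t) w Y - Phi b f (t := t) w Y * X) := by
  have h0 : adjP b (X * Y - Y * X) = 0 := by
    rw [map_sub, adjP_mul hX hY, adjP_mul hY hX, sub_self]
  simp only [Phi_apply, h0, map_zero, sub_self]
  rw [top_mul_inN hub (blkP_inBlk 1 t _) hY, inN_mul_bot hlb (blkP_inBlk 1 t _) hY,
    top_mul_inN hub (blkP_inBlk 1 t _) hX, inN_mul_bot hlb (blkP_inBlk 1 t _) hX]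
  simp

lemma Phi1_leib (hf : IsDerN b f) (ht : 3 ≤ t) (hub : ∀ r, b r ≤ t) (hlb : ∀ r, 1 ≤ b r)
    {X Y : Matrix (Fin n) (Fin n) F} (hX : InN b X) (hY : InN b Y) :
    Phi1 b f (t := t) (X * Y - Y * X)
      = (Phi1 b f (t := t) X * Y - Y * Phi1 b f (t := t) X)
        + (X * Phi1 b f (t := t) Y - Phi1 b f (t := t) Y * X) := by
  have h0 : blkP b 1 2 (X * Y - Y * X) = 0 := by
    rw [map_sub, blkP_mul_adj_zero (by omega) hX hY, blkP_mul_adj_zero (by omega) hY hX,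
      sub_self]
  simp only [Phi1_apply]
  rw [h0, map_zero, map_zero,
    top_mul_inN hub (blkP_inBlk 2 t _) hY,
    top_mul_inN hub (blkP_inBlk 2 t _) hX,
    mul_blk2 hlb (blkP_inBlk 2 t _) hY,
    mul_blk2 hlb (blkP_inBlk 2 t _) hX,
    SYM1 hf ht (blkP_inBlk 1 2 X) (blkP_inBlk 1 2 Y)]
  abel

lemma Psi1_leib (hf : IsDerN b f) (ht : 3 ≤ t) (hub : ∀ r, b r ≤ t) (hlb : ∀ r, 1 ≤ b r)
    {X Y : Matrix (Fin n) (Fin n) F} (hX : InN b X) (hY : InN b Y) :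
    Psi1 b f (t := t) (X * Y - Y * X)
      = (Psi1 b f (t := t) X * Y - Y * Psi1 b f (t := t) X)
        + (X * Psi1 b f (t := t) Y - Psi1 b f (t := t) Y * X) := by
  have h12 : blkP b 1 2 (X * Y - Y * X) = 0 := by
    rw [map_sub, blkP_mul_adj_zero (by omega) hX hY, blkP_mul_adj_zero (by omega) hY hX,
      sub_self]
  have e1 := blkP_mul_mid hX hY 1
  have e2 := blkP_mul_mid hY hX 1
  norm_num at e1 e2
  have h13 : blkP b 1 3 (X * Y - Y * X)
      = blkP b 1 2 X * blkP b 2 3 Y - blkP b 1 2 Y * blkP b 2 3 X := by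
    rw [map_sub, e1, e2]
  simp only [Psi1_apply]
  rw [h12, h13, map_zero, map_zero, zero_add, map_sub, map_sub,
    C1 hf ht (blkP_inBlk 1 2 X) (blkP_inBlk 2 3 Y),
    C1 hf ht (blkP_inBlk 1 2 Y) (blkP_inBlk 2 3 X),
    add_mul, add_mul, mul_add, mul_add,
    top_mul_inN hub (blkP_inBlk 3 t _) hY,
    top_mul_inN hub (blkP_inBlk 2 t _) hY,
    top_mul_inN hub (blkP_inBlk 3 t _) hX,
    top_mul_inN hub (blkP_inBlk 2 t _) hX,
    mul_blk3 hlb (blkP_inBlk 3 t _) hY,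
    mul_blk3 hlb (blkP_inBlk 3 t _) hX,
    mul_blk2 hlb (blkP_inBlk 2 t _) hY,
    mul_blk2 hlb (blkP_inBlk 2 t _) hX,
    C2' hf ht hlb (blkP_inBlk 1 2 X) (blkP_inBlk 1 3 Y),
    C2' hf ht hlb (blkP_inBlk 1 2 Y) (blkP_inBlk 1 3 X)]
  abel

lemma Phi2_leib (hf : IsDerN b f) (ht : 3 ≤ t) (hub : ∀ r, b r ≤ t) (hlb : ∀ r, 1 ≤ b r)
    {X Y : Matrix (Fin n) (Fin n) F} (hX : InN b X) (hY : InN b Y) :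
    Phi2 b f (t := t) (X * Y - Y * X)
      = (Phi2 b f (t := t) X * Y - Y * Phi2 b f (t := t) X)
        + (X * Phi2 b f (t := t) Y - Phi2 b f (t := t) Y * X) := by
  have h0 : blkP b (t-1) t (X * Y - Y * X) = 0 := by
    rw [map_sub, blkP_mul_adj_zero (by omega) hX hY, blkP_mul_adj_zero (by omega) hY hX,
      sub_self]
  simp only [Phi2_apply]
  rw [h0, map_zero, map_zero,
    inN_mul_bot hlb (blkP_inBlk 1 (t-1) _) hY,
    inN_mul_bot hlb (blkP_inBlk 1 (t-1) _) hX,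
    mul_blkt1 hub (blkP_inBlk 1 (t-1) _) hY,
    mul_blkt1 hub (blkP_inBlk 1 (t-1) _) hX,
    SYM2 hf ht hub (blkP_inBlk (t-1) t X) (blkP_inBlk (t-1) t Y)]
  abel

lemma Psi2_leib (hf : IsDerN b f) (ht : 3 ≤ t) (hub : ∀ r, b r ≤ t) (hlb : ∀ r, 1 ≤ b r)
    {X Y : Matrix (Fin n) (Fin n) F} (hX : InN b X) (hY : InN b Y) :
    Psi2 b f (t := t) (X * Y - Y * X)
      = (Psi2 b f (t := t) X * Y - Y * Psi2 b f (t := t) X)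
        + (X * Psi2 b f (t := t) Y - Psi2 b f (t := t) Y * X) := by
  have h0 : blkP b (t-1) t (X * Y - Y * X) = 0 := by
    rw [map_sub, blkP_mul_adj_zero (by omega) hX hY, blkP_mul_adj_zero (by omega) hY hX,
      sub_self]
  have htt : t - 2 + 2 = t := by omega
  have htt1 : t - 2 + 1 = t - 1 := by omega
  have e1 := blkP_mul_mid hX hY (t-2)
  have e2 := blkP_mul_mid hY hX (t-2)
  rw [htt, htt1] at e1 e2
  have h13 : blkP b (t-2) t (X * Y - Y * X)
      = blkP b (t-2) (t-1) X * blkP b (t-1) t Y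
        - blkP b (t-2) (t-1) Y * blkP b (t-1) t X := by
    rw [map_sub, e1, e2]
  simp only [Psi2_apply]
  rw [h0, h13, map_zero, map_zero, zero_add, map_sub, map_sub,
    C1' hf ht hub (blkP_inBlk (t-2) (t-1) X) (blkP_inBlk (t-1) t Y),
    C1' hf ht hub (blkP_inBlk (t-2) (t-1) Y) (blkP_inBlk (t-1) t X),
    add_mul, add_mul, mul_add, mul_add,
    inN_mul_bot hlb (blkP_inBlk 1 (t-2) _) hY,
    inN_mul_bot hlb (blkP_inBlk 1 (t-1) _) hY,
    inN_mul_bot hlb (blkP_inBlk 1 (t-2) _) hX,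
    inN_mul_bot hlb (blkP_inBlk 1 (t-1) _) hX,
    mul_blkt2 ht hub (blkP_inBlk 1 (t-2) _) hY,
    mul_blkt2 ht hub (blkP_inBlk 1 (t-2) _) hX,
    mul_blkt1 hub (blkP_inBlk 1 (t-1) _) hY,
    mul_blkt1 hub (blkP_inBlk 1 (t-1) _) hX,
    C2'' hf ht hub (blkP_inBlk (t-1) t X) (blkP_inBlk (t-2) t Y),
    C2'' hf ht hub (blkP_inBlk (t-1) t Y) (blkP_inBlk (t-2) t X)]
  abel

end leibniz


section gen

variable {f : Matrix (Fin n) (Fin n) F →ₗ[F] Matrix (Fin n) (Fin n) F}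
variable {w : ℕ → Fin n}

lemma InBlk_zero (k l : ℕ) : InBlk b k l (0 : Matrix (Fin n) (Fin n) F) :=
  fun _ _ _ => rfl

lemma E_inBlk {r s : Fin n} {k l : ℕ} (h1 : b r = k) (h2 : b s = l) :
    InBlk b k l (E (F := F) r s) := by
  intro p q h
  rw [E_apply, if_neg]
  rintro ⟨rfl, rfl⟩
  exact h ⟨h1, h2⟩

lemma Br_inBlk {i : ℕ} {w' : Fin n} (hw' : b w' = i + 1) (r : Fin n) :
    InBlk b i (i+1) (if b r = i then E (F := F) r w' else 0) := by
  split
  · next h => exact E_inBlk h hw'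
  · exact InBlk_zero i (i+1)

lemma Cr_inBlk {i j : ℕ} {w' : Fin n} (hw' : b w' = i + 1)
    {M : Matrix (Fin n) (Fin n) F} (hM : InBlk b i j M) (r : Fin n) :
    InBlk b (i+1) j (Matrix.of fun u v => if u = w' ∧ b r = i then M r v else 0) := by
  intro p q h
  rw [Matrix.of_apply]
  split
  · next h2 =>
    obtain ⟨rfl, hbr⟩ := h2
    by_cases hq : b q = j
    · exact absurd ⟨hw', hq⟩ h
    · exact hM r q (by tauto)
  · rfl

/-- decomposition of a block into brackets of an adjacent block with the rest -/
lemma DECrow {i j : ℕ} (hij : i ≠ j) (w' : Fin n)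
    {M : Matrix (Fin n) (Fin n) F} (hM : InBlk b i j M) :
    M = ∑ r : Fin n,
      ((if b r = i then E (F := F) r w' else 0)
          * Matrix.of (fun u v => if u = w' ∧ b r = i then M r v else 0)
        - Matrix.of (fun u v => if u = w' ∧ b r = i then M r v else 0)
          * (if b r = i then E (F := F) r w' else 0)) := by
  ext u v
  rw [Matrix.sum_apply]
  have key : ∀ r : Fin n,
      ((if b r = i then E (F := F) r w' else 0)
          * Matrix.of (fun u v => if u = w' ∧ b r = i then M r v else 0)
        - Matrix.of (fun u v => if u = w' ∧ b r = i then M r v else 0)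
          * (if b r = i then E (F := F) r w' else 0)) u v
      = if r = u ∧ b r = i then M r v else 0 := by
    intro r
    rw [Matrix.sub_apply]
    by_cases hbr : b r = i
    · rw [if_pos hbr, E_mul_apply, mul_E_apply]
      have h3 : M r r = 0 := hM r r (by rintro ⟨ha, hb⟩; omega)
      simp only [Matrix.of_apply, true_and]
      rw [if_pos hbr]
      have h5 : (if v = w' then (if u = w' ∧ b r = i then M r r else 0) else 0) = 0 := by
        split
        · split
          · exact h3
          · rfl
        · rfl
      rw [h5, sub_zero]
      by_cases hu : u = r
      · rw [if_pos hu, if_pos (show r = u ∧ b r = i from ⟨hu.symm, hbr⟩)]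
      · rw [if_neg hu, if_neg (by tauto)]
    · rw [if_neg hbr, Matrix.zero_mul, Matrix.mul_zero, Matrix.zero_apply, sub_zero,
        if_neg (by tauto)]
  rw [Finset.sum_congr rfl (fun r _ => key r)]
  rw [Finset.sum_eq_single u (fun r _ hr => by rw [if_neg (by tauto)])
    (fun h => absurd (Finset.mem_univ u) h)]
  by_cases hu : b u = i
  · rw [if_pos ⟨rfl, hu⟩]
  · rw [if_neg (by tauto), hM u v (by tauto)]

/-- vanishing of the (k,t) components on N^{12} when block 1 is not a singleton -/
lemma S1ab (hf : IsDerN b f) (ht : 3 ≤ t) {k : ℕ} (hk : 2 ≤ k)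
    (hex : ∀ r : Fin n, ∃ u, b u = 1 ∧ u ≠ r)
    {M : Matrix (Fin n) (Fin n) F} (hM : InBlk b 1 2 M) : blkP b k t (f M) = 0 := by
  ext p q
  rw [blkP_apply, Matrix.zero_apply]
  split
  · next hpq =>
    rw [f_apply_eq_sum]
    refine Finset.sum_eq_zero fun r _ => Finset.sum_eq_zero fun s _ => ?_
    by_cases hz : M r s = 0
    · rw [hz, zero_mul]
    · have hrs : b r = 1 ∧ b s = 2 := by
        by_contra hh
        exact hz (hM r s hh)
      obtain ⟨u, hu1, hur⟩ := hex r
      have H := rowL hf (show b r < b s by omega) (show b u < b p by omega) hur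
        (show u ≠ s from fun h => by rw [h] at hu1; omega)
        (show p ≠ r from fun h => by have := congrArg b h; omega) q
      rw [if_neg (show q ≠ s from fun h => by have := congrArg b h; omega), neg_zero] at H
      rw [H, mul_zero]
  · rfl

/-- vanishing of the (2,t) component on N^{13} when block 1 is not a singleton -/
lemma S1c (hf : IsDerN b f) (ht : 3 ≤ t)
    (hex : ∀ r : Fin n, ∃ u, b u = 1 ∧ u ≠ r)
    {w2 : Fin n} (hw2 : b w2 = 2)
    {M : Matrix (Fin n) (Fin n) F} (hM : InBlk b 1 3 M) : blkP b 2 t (f M) = 0 := by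
  rw [DECrow (show (1:ℕ) ≠ 3 by omega) w2 hM, map_sum, map_sum]
  refine Finset.sum_eq_zero fun r _ => ?_
  have hB : InBlk b 1 2 (if b r = 1 then E (F := F) r w2 else 0) := Br_inBlk hw2 r
  have hC : InBlk b 2 3
      (Matrix.of fun u v => if u = w2 ∧ b r = 1 then M r v else 0) := Cr_inBlk hw2 hM r
  rw [mul_blk_zero hC hB (by omega), sub_zero,
    C1 hf ht hB hC, S1ab (k := 3) hf ht (by omega) hex hB, mul_zero, neg_zero]

end gen


section gen2

variable {f : Matrix (Fin n) (Fin n) F →ₗ[F] Matrix (Fin n) (Fin n) F}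
variable {w : ℕ → Fin n}

lemma S2ab (hf : IsDerN b f) (ht : 3 ≤ t) {k : ℕ} (hk : k < t)
    (hex : ∀ s : Fin n, ∃ v, b v = t ∧ v ≠ s)
    {M : Matrix (Fin n) (Fin n) F} (hM : InBlk b (t-1) t M) : blkP b 1 k (f M) = 0 := by
  ext p q
  rw [blkP_apply, Matrix.zero_apply]
  split
  · next hpq =>
    rw [f_apply_eq_sum]
    refine Finset.sum_eq_zero fun r _ => Finset.sum_eq_zero fun s _ => ?_
    by_cases hz : M r s = 0
    · rw [hz, zero_mul]
    · have hrs : b r = t - 1 ∧ b s = t := by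
        by_contra hh
        exact hz (hM r s hh)
      obtain ⟨v, hv1, hvs⟩ := hex s
      have H := colL hf (show b r < b s by omega) (show b q < b v by omega)
        (show v ≠ r from fun h => by rw [h] at hv1; omega) hvs
        (show s ≠ q from fun h => by have := congrArg b h; omega) p
      rw [if_neg (show p ≠ r from fun h => by have := congrArg b h; omega), neg_zero] at H
      rw [H, mul_zero]
  · rfl

lemma S2c (hf : IsDerN b f) (ht : 3 ≤ t) (hub : ∀ r, b r ≤ t)
    (hex : ∀ s : Fin n, ∃ v, b v = t ∧ v ≠ s)
    {wt1 : Fin n} (hwt1 : b wt1 = t - 1)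
    {M : Matrix (Fin n) (Fin n) F} (hM : InBlk b (t-2) t M) : blkP b 1 (t-1) (f M) = 0 := by
  have hw' : b wt1 = t - 2 + 1 := by omega
  rw [DECrow (show t - 2 ≠ t by omega) wt1 hM, map_sum, map_sum]
  refine Finset.sum_eq_zero fun r _ => ?_
  have hB : InBlk b (t-2) (t-2+1) (if b r = t - 2 then E (F := F) r wt1 else 0) :=
    Br_inBlk hw' r
  have hB' : InBlk b (t-2) (t-1) (if b r = t - 2 then E (F := F) r wt1 else 0) := by
    rw [show t - 2 + 1 = t - 1 by omega] at hB
    exact hB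
  have hC : InBlk b (t-2+1) t
      (Matrix.of fun u v => if u = wt1 ∧ b r = t - 2 then M r v else 0) := Cr_inBlk hw' hM r
  have hC' : InBlk b (t-1) t
      (Matrix.of fun u v => if u = wt1 ∧ b r = t - 2 then M r v else 0) := by
    rw [show t - 2 + 1 = t - 1 by omega] at hC
    exact hC
  rw [mul_blk_zero hC' hB' (by omega), sub_zero,
    C1' hf ht hub hB' hC', S2ab (k := t - 2) hf ht (by omega) hex hC', zero_mul, neg_zero]

variable (b f) in
/-- the full candidate decomposition -/
noncomputable def DD (w : ℕ → Fin n) :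
    Matrix (Fin n) (Fin n) F →ₗ[F] Matrix (Fin n) (Fin n) F :=
  XL b f (t := t) w + Phi b f (t := t) w + Phi1 b f (t := t) + Phi2 b f (t := t)
    + Psi1 b f (t := t) + Psi2 b f (t := t)

lemma DD_apply (M : Matrix (Fin n) (Fin n) F) :
    DD b f (t := t) w M = XL b f (t := t) w M + Phi b f (t := t) w M + Phi1 b f (t := t) M
      + Phi2 b f (t := t) M + Psi1 b f (t := t) M + Psi2 b f (t := t) M := rfl

lemma DD_leib (hf : IsDerN b f) (ht : 3 ≤ t) (hub : ∀ r, b r ≤ t) (hlb : ∀ r, 1 ≤ b r)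
    {X Y : Matrix (Fin n) (Fin n) F} (hX : InN b X) (hY : InN b Y) :
    DD b f (t := t) w (X * Y - Y * X)
      = (DD b f (t := t) w X * Y - Y * DD b f (t := t) w X)
        + (X * DD b f (t := t) w Y - DD b f (t := t) w Y * X) := by
  simp only [DD_apply]
  rw [XL_leib, Phi_leib ht hub hlb hX hY, Phi1_leib hf ht hub hlb hX hY,
    Phi2_leib hf ht hub hlb hX hY, Psi1_leib hf ht hub hlb hX hY,
    Psi2_leib hf ht hub hlb hX hY]
  noncomm_ring

lemma GEN0 (hf : IsDerN b f) (ht : 3 ≤ t) (hub : ∀ r, b r ≤ t) (hlb : ∀ r, 1 ≤ b r)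
    (hw : ∀ k, 1 ≤ k → k ≤ t → b (w k) = k)
    {i : ℕ} (h1 : 1 ≤ i) (h2 : i + 1 ≤ t) {M : Matrix (Fin n) (Fin n) F}
    (hM : InBlk b i (i+1) M) : f M = DD b f (t := t) w M := by
  have hE : ∀ r s : Fin n, M r s ≠ 0 → f (E (F := F) r s) = DD b f (t := t) w (E r s) := by
    intro r s hz
    have hrs : b r = i ∧ b s = i + 1 := by
      by_contra hh
      exact hz (hM r s hh)
    rw [DD_apply]
    exact KEY hf ht hub hlb hw (by omega) (by omega) (by omega)
  conv_lhs => rw [Matrix.matrix_eq_sum_single M]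
  conv_rhs => rw [Matrix.matrix_eq_sum_single M]
  rw [map_sum, map_sum]
  refine Finset.sum_congr rfl fun r _ => ?_
  rw [map_sum, map_sum]
  refine Finset.sum_congr rfl fun s _ => ?_
  by_cases hz : M r s = 0
  · rw [hz, Matrix.single_zero, map_zero, map_zero]
  · have e : Matrix.single r s (M r s) = M r s • E (F := F) r s := by
      rw [E, Matrix.smul_single, smul_eq_mul, mul_one]
    rw [e, _root_.map_smul, _root_.map_smul, hE r s hz]

lemma GEN (hf : IsDerN b f) (ht : 3 ≤ t) (hub : ∀ r, b r ≤ t) (hlb : ∀ r, 1 ≤ b r)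
    (hw : ∀ k, 1 ≤ k → k ≤ t → b (w k) = k) :
    ∀ d i j : ℕ, 1 ≤ i → j ≤ t → j = i + d + 1 →
      ∀ M : Matrix (Fin n) (Fin n) F, InBlk b i j M → f M = DD b f (t := t) w M := by
  intro d
  induction d with
  | zero =>
    intro i j h1 h2 h3 M hM
    subst h3
    exact GEN0 hf ht hub hlb hw h1 h2 hM
  | succ d ih =>
    intro i j h1 h2 h3 M hM
    have hw' : b (w (i+1)) = i + 1 := hw _ (by omega) (by omega)
    rw [DECrow (show i ≠ j by omega) (w (i+1)) hM, map_sum, map_sum]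
    refine Finset.sum_congr rfl fun r _ => ?_
    have hB : InBlk b i (i+1) (if b r = i then E (F := F) r (w (i+1)) else 0) :=
      Br_inBlk hw' r
    have hC : InBlk b (i+1) j
        (Matrix.of fun u v => if u = w (i+1) ∧ b r = i then M r v else 0) :=
      Cr_inBlk hw' hM r
    have hBn := inN_of_inBlk (show i < i + 1 by omega) hB
    have hCn := inN_of_inBlk (show i + 1 < j by omega) hC
    rw [hf.2 _ _ hBn hCn, DD_leib hf ht hub hlb hBn hCn,
      GEN0 hf ht hub hlb hw h1 (by omega) hB,
      ih (i+1) j (by omega) h2 (by omega) _ hC]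

lemma blkP_le_zero {i j : ℕ} {A : Matrix (Fin n) (Fin n) F} (hA : InN b A) (h : j ≤ i) :
    blkP b i j A = 0 := by
  ext r s
  rw [blkP_apply, Matrix.zero_apply]
  split
  · next h2 => exact hA r s (by omega)
  · rfl

lemma final (hf : IsDerN b f) (ht : 3 ≤ t) (hub : ∀ r, b r ≤ t) (hlb : ∀ r, 1 ≤ b r)
    (hw : ∀ k, 1 ≤ k → k ≤ t → b (w k) = k)
    {A : Matrix (Fin n) (Fin n) F} (hA : InN b A) : f A = DD b f (t := t) w A := by
  conv_lhs => rw [blk_decomp hlb hub A]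
  conv_rhs => rw [blk_decomp hlb hub A]
  rw [map_sum, map_sum]
  refine Finset.sum_congr rfl fun i hi => ?_
  rw [map_sum, map_sum]
  refine Finset.sum_congr rfl fun j hj => ?_
  by_cases hij : i < j
  · exact GEN hf ht hub hlb hw (j - i - 1) i j (Finset.mem_Icc.mp hi).1
      (Finset.mem_Icc.mp hj).2 (by omega) _ (blkP_inBlk i j A)
  · rw [blkP_le_zero hA (by omega), map_zero, map_zero]

end gen2

end S18

open S18 in
/-- Theorem for char = 2: every derivation `f` of `N` decomposes as
`f = ad X + φ + φ₁ + φ₂ + ψ₁ + ψ₂`, where `X, φ, φ₁, φ₂` are as in the char ≠ 2 case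
and `ψ₁, ψ₂` are derivations supported on `N^{12} ⊕ N^{13}` (resp. `N^{t-1,t} ⊕ N^{t-2,t}`)
with values in `N^{3t} ⊕ N^{2t}` (resp. `N^{1,t-2} ⊕ N^{1,t-1}`), vanishing unless block 1
(resp. block `t`) is a single index. -/
theorem stmt18 {F : Type*} [Field F] {n t : ℕ} (b : Fin n → ℕ)
    (hn : 1 ≤ n) (ht : 3 ≤ t) (hmono : Monotone b)
    (hlb : ∀ r, 1 ≤ b r) (hub : ∀ r, b r ≤ t)
    (hsurj : ∀ k, 1 ≤ k → k ≤ t → ∃ r, b r = k)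
    (hchar : ringChar F = 2)
    (f : Matrix (Fin n) (Fin n) F →ₗ[F] Matrix (Fin n) (Fin n) F)
    (hf : IsDerN b f) :
    ∃ (X : Matrix (Fin n) (Fin n) F)
      (φ φ₁ φ₂ ψ₁ ψ₂ : Matrix (Fin n) (Fin n) F →ₗ[F] Matrix (Fin n) (Fin n) F),
      (∀ r s, b s < b r → X r s = 0) ∧
      (∀ A, InN b A → InBlk b 1 t (φ A)) ∧
      (∀ i j, i + 1 < j → ∀ A, InBlk b i j A → φ A = 0) ∧
      IsDerN b φ₁ ∧
      (∀ A, InBlk b 1 2 A → InBlk b 2 t (φ₁ A)) ∧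
      (∀ i j, 1 ≤ i → i < j → j ≤ t → ¬(i = 1 ∧ j = 2) →
        ∀ A, InBlk b i j A → φ₁ A = 0) ∧
      ((Finset.univ.filter fun r => b r = 1).card ≠ 1 →
        ∀ A, InN b A → φ₁ A = 0) ∧
      IsDerN b φ₂ ∧
      (∀ A, InBlk b (t - 1) t A → InBlk b 1 (t - 1) (φ₂ A)) ∧
      (∀ i j, 1 ≤ i → i < j → j ≤ t → ¬(i = t - 1 ∧ j = t) →
        ∀ A, InBlk b i j A → φ₂ A = 0) ∧
      ((Finset.univ.filter fun s => b s = t).card ≠ 1 →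
        ∀ A, InN b A → φ₂ A = 0) ∧
      IsDerN b ψ₁ ∧
      (∀ A, InBlk b 1 2 A → InBlk b 3 t (ψ₁ A)) ∧
      (∀ A, InBlk b 1 3 A → InBlk b 2 t (ψ₁ A)) ∧
      (∀ i j, 1 ≤ i → i < j → j ≤ t → ¬(i = 1 ∧ j = 2) → ¬(i = 1 ∧ j = 3) →
        ∀ A, InBlk b i j A → ψ₁ A = 0) ∧
      ((Finset.univ.filter fun r => b r = 1).card ≠ 1 →
        ∀ A, InN b A → ψ₁ A = 0) ∧
      IsDerN b ψ₂ ∧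
      (∀ A, InBlk b (t - 1) t A → InBlk b 1 (t - 2) (ψ₂ A)) ∧
      (∀ A, InBlk b (t - 2) t A → InBlk b 1 (t - 1) (ψ₂ A)) ∧
      (∀ i j, 1 ≤ i → i < j → j ≤ t → ¬(i = t - 1 ∧ j = t) → ¬(i = t - 2 ∧ j = t) →
        ∀ A, InBlk b i j A → ψ₂ A = 0) ∧
      ((Finset.univ.filter fun s => b s = t).card ≠ 1 →
        ∀ A, InN b A → ψ₂ A = 0) ∧
      (∀ A, InN b A → f A = X * A - A * X + φ A + φ₁ A + φ₂ A + ψ₁ A + ψ₂ A) := by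
  classical
  have hwex : ∀ k : ℕ, ∃ r : Fin n, 1 ≤ k → k ≤ t → b r = k := by
    intro k
    by_cases hk : 1 ≤ k ∧ k ≤ t
    · obtain ⟨r, hr⟩ := hsurj k hk.1 hk.2
      exact ⟨r, fun _ _ => hr⟩
    · exact ⟨⟨0, hn⟩, fun h1 h2 => absurd ⟨h1, h2⟩ hk⟩
  choose w hw using hwex
  have hex1 : (Finset.univ.filter fun r => b r = 1).card ≠ 1 →
      ∀ r : Fin n, ∃ u, b u = 1 ∧ u ≠ r := by
    intro hcard r
    obtain ⟨r0, hr0⟩ := hsurj 1 le_rfl (by omega)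
    have h1 : 0 < (Finset.univ.filter fun r => b r = 1).card :=
      Finset.card_pos.mpr ⟨r0, Finset.mem_filter.mpr ⟨Finset.mem_univ _, hr0⟩⟩
    have h2 : 1 < (Finset.univ.filter fun r => b r = 1).card := by omega
    obtain ⟨a, ha, c, hc, hac⟩ := Finset.one_lt_card.mp h2
    rw [Finset.mem_filter] at ha hc
    by_cases har : a = r
    · exact ⟨c, hc.2, fun h => hac (by rw [h, ← har])⟩
    · exact ⟨a, ha.2, har⟩
  have hex2 : (Finset.univ.filter fun s => b s = t).card ≠ 1 →
      ∀ r : Fin n, ∃ u, b u = t ∧ u ≠ r := by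
    intro hcard r
    obtain ⟨r0, hr0⟩ := hsurj t (by omega) le_rfl
    have h1 : 0 < (Finset.univ.filter fun s => b s = t).card :=
      Finset.card_pos.mpr ⟨r0, Finset.mem_filter.mpr ⟨Finset.mem_univ _, hr0⟩⟩
    have h2 : 1 < (Finset.univ.filter fun s => b s = t).card := by omega
    obtain ⟨a, ha, c, hc, hac⟩ := Finset.one_lt_card.mp h2
    rw [Finset.mem_filter] at ha hc
    by_cases har : a = r
    · exact ⟨c, hc.2, fun h => hac (by rw [h, ← har])⟩
    · exact ⟨a, ha.2, har⟩
  refine ⟨XX b f (t := t) w, Phi b f (t := t) w, Phi1 b f (t := t), Phi2 b f (t := t),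
    Psi1 b f (t := t), Psi2 b f (t := t),
    ?_, ?_, ?_, ?_, ?_, ?_, ?_, ?_, ?_, ?_, ?_, ?_, ?_, ?_, ?_, ?_, ?_, ?_, ?_, ?_, ?_, ?_⟩
  · intro r s h
    exact XX_lower h
  · intro A _
    rw [Phi_apply]
    exact blkP_inBlk _ _ _
  · intro i j hij A hA
    rw [Phi_apply, adjP_of_inBlk_far hA (by omega)]
    simp
  · constructor
    · intro A hA
      rw [Phi1_apply]
      exact blkP_inN _ _ (hf.1 _ (blkP_inN _ _ hA))
    · intro X Y hX hY
      exact Phi1_leib hf ht hub hlb hX hY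
  · intro A _
    rw [Phi1_apply]
    exact blkP_inBlk _ _ _
  · intro i j _ _ _ hne A hA
    rw [Phi1_apply, blkP_of_inBlk hA (by rintro ⟨h1, h2⟩; exact hne ⟨h1.symm, h2.symm⟩)]
    simp
  · intro hcard A hA
    rw [Phi1_apply]
    exact S1ab (k := 2) hf ht le_rfl (hex1 hcard) (blkP_inBlk 1 2 A)
  · constructor
    · intro A hA
      rw [Phi2_apply]
      exact blkP_inN _ _ (hf.1 _ (blkP_inN _ _ hA))
    · intro X Y hX hY
      exact Phi2_leib hf ht hub hlb hX hY
  · intro A _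
    rw [Phi2_apply]
    exact blkP_inBlk _ _ _
  · intro i j _ _ _ hne A hA
    rw [Phi2_apply, blkP_of_inBlk hA (by rintro ⟨h1, h2⟩; exact hne ⟨h1.symm, h2.symm⟩)]
    simp
  · intro hcard A hA
    rw [Phi2_apply]
    exact S2ab (k := t - 1) hf ht (by omega) (hex2 hcard) (blkP_inBlk (t-1) t A)
  · constructor
    · intro A hA
      rw [Psi1_apply]
      exact InN_add (blkP_inN _ _ (hf.1 _ (blkP_inN _ _ hA)))
        (blkP_inN _ _ (hf.1 _ (blkP_inN _ _ hA)))
    · intro X Y hX hY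
      exact Psi1_leib hf ht hub hlb hX hY
  · intro A hA
    rw [Psi1_apply, blkP_of_inBlk (k := 1) (l := 3) hA (by omega), map_zero, map_zero,
      add_zero]
    exact blkP_inBlk _ _ _
  · intro A hA
    rw [Psi1_apply, blkP_of_inBlk (k := 1) (l := 2) hA (by omega), map_zero, map_zero,
      zero_add]
    exact blkP_inBlk _ _ _
  · intro i j _ _ _ hne1 hne2 A hA
    rw [Psi1_apply, blkP_of_inBlk hA (by rintro ⟨h1, h2⟩; exact hne1 ⟨h1.symm, h2.symm⟩),
      blkP_of_inBlk hA (by rintro ⟨h1, h2⟩; exact hne2 ⟨h1.symm, h2.symm⟩)]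
    simp
  · intro hcard A hA
    rw [Psi1_apply,
      S1ab (k := 3) hf ht (by omega) (hex1 hcard) (blkP_inBlk 1 2 A),
      S1c hf ht (hex1 hcard) (hw 2 (by omega) (by omega)) (blkP_inBlk 1 3 A), add_zero]
  · constructor
    · intro A hA
      rw [Psi2_apply]
      exact InN_add (blkP_inN _ _ (hf.1 _ (blkP_inN _ _ hA)))
        (blkP_inN _ _ (hf.1 _ (blkP_inN _ _ hA)))
    · intro X Y hX hY
      exact Psi2_leib hf ht hub hlb hX hY
  · intro A hA
    rw [Psi2_apply, blkP_of_inBlk (k := t - 2) (l := t) hA (by omega), map_zero, map_zero,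
      add_zero]
    exact blkP_inBlk _ _ _
  · intro A hA
    rw [Psi2_apply, blkP_of_inBlk (k := t - 1) (l := t) hA (by omega), map_zero, map_zero,
      zero_add]
    exact blkP_inBlk _ _ _
  · intro i j _ _ _ hne1 hne2 A hA
    rw [Psi2_apply, blkP_of_inBlk hA (by rintro ⟨h1, h2⟩; exact hne1 ⟨h1.symm, h2.symm⟩),
      blkP_of_inBlk hA (by rintro ⟨h1, h2⟩; exact hne2 ⟨h1.symm, h2.symm⟩)]
    simp
  · intro hcard A hA
    rw [Psi2_apply,
      S2ab (k := t - 2) hf ht (by omega) (hex2 hcard) (blkP_inBlk (t-1) t A),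
      S2c hf ht hub (hex2 hcard) (hw (t-1) (by omega) (by omega)) (blkP_inBlk (t-2) t A),
      add_zero]
  · intro A hA
    have h := final hf ht hub hlb hw hA
    rw [DD_apply] at h
    rw [h, XL_apply]
end

section
/- Let F be a field of characteristic 2 and let N be the Lie algebra of strictly upper triangular 4×4 matrices over F (with bracket [X,Y] = XY − YX). N has basis {E₁₂, E₁₃, E₁₄, E₂₃, E₂₄, E₃₄}, where E_{ij} is the matrix with entry 1 in position (i,j) and 0 elsewhere. The F-linear map f : N → N determined on this basis by f(E₁₂) = −E₃₄, f(E₁₃) = E₂₄, and f(E₁₄) = f(E₂₃) = f(E₂₄) = f(E₃₄) = 0 is a derivation of N, i.e. f([X,Y]) = [f(X),Y] + [X,f(Y)] for all X, Y ∈ N. -/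
section aux

variable {F : Type*} [Field F]

lemma decomp_upper (Z : Matrix (Fin 4) (Fin 4) F)
    (hZ : ∀ r s : Fin 4, s ≤ r → Z r s = 0) :
    Z = Z 0 1 • Matrix.single 0 1 (1 : F)
      + Z 0 2 • Matrix.single 0 2 (1 : F)
      + Z 0 3 • Matrix.single 0 3 (1 : F)
      + Z 1 2 • Matrix.single 1 2 (1 : F)
      + Z 1 3 • Matrix.single 1 3 (1 : F)
      + Z 2 3 • Matrix.single 2 3 (1 : F) := by
  ext i j
  fin_cases i <;> fin_cases j <;>
    simp [Matrix.single, hZ]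

lemma comm_upper (X Y : Matrix (Fin 4) (Fin 4) F)
    (hX : ∀ r s : Fin 4, s ≤ r → X r s = 0) (hY : ∀ r s : Fin 4, s ≤ r → Y r s = 0) :
    ∀ r s : Fin 4, s ≤ r → (X * Y - Y * X) r s = 0 := by
  intro r s hrs
  have h1 : ∀ k, X r k * Y k s = 0 := by
    intro k
    rcases le_or_gt k r with h | h
    · rw [hX r k h, zero_mul]
    · rw [hY k s (hrs.trans h.le), mul_zero]
  have h2 : ∀ k, Y r k * X k s = 0 := by
    intro k
    rcases le_or_gt k r with h | h
    · rw [hY r k h, zero_mul]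
    · rw [hX k s (hrs.trans h.le), mul_zero]
  simp only [Matrix.sub_apply, Matrix.mul_apply]
  rw [Finset.sum_eq_zero fun k _ => h1 k, Finset.sum_eq_zero fun k _ => h2 k, sub_zero]

end aux

set_option maxRecDepth 8000 in
set_option maxHeartbeats 1000000 in
/-- Example: let `char F = 2` and let `N` be the Lie algebra of strictly
upper triangular `4×4` matrices over `F`. The linear map `f` determined on the basis
`{E₁₂, E₁₃, E₁₄, E₂₃, E₂₄, E₃₄}` by `f(E₁₂) = -E₃₄`, `f(E₁₃) = E₂₄`, and
`f(E₁₄) = f(E₂₃) = f(E₂₄) = f(E₃₄) = 0` is a derivation of `N`: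
`f([X,Y]) = [f(X),Y] + [X,f(Y)]` for all `X, Y ∈ N`. -/
theorem stmt19 {F : Type*} [Field F] (hchar : ringChar F = 2)
    (f : Matrix (Fin 4) (Fin 4) F →ₗ[F] Matrix (Fin 4) (Fin 4) F)
    (hE12 : f (Matrix.single 0 1 (1 : F)) = -(Matrix.single 2 3 (1 : F)))
    (hE13 : f (Matrix.single 0 2 (1 : F)) = Matrix.single 1 3 (1 : F))
    (hE14 : f (Matrix.single 0 3 (1 : F)) = 0)
    (hE23 : f (Matrix.single 1 2 (1 : F)) = 0)
    (hE24 : f (Matrix.single 1 3 (1 : F)) = 0)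
    (hE34 : f (Matrix.single 2 3 (1 : F)) = 0) :
    ∀ X Y : Matrix (Fin 4) (Fin 4) F,
      (∀ r s : Fin 4, s ≤ r → X r s = 0) → (∀ r s : Fin 4, s ≤ r → Y r s = 0) →
      f (X * Y - Y * X) = (f X * Y - Y * f X) + (X * f Y - f Y * X) := by
  have h2 : (2 : F) = 0 := by
    haveI : CharP F 2 := hchar ▸ ringChar.charP F
    exact CharP.cast_eq_zero F 2
  have key : ∀ Z : Matrix (Fin 4) (Fin 4) F, (∀ r s : Fin 4, s ≤ r → Z r s = 0) →
      f Z = Z 0 1 • (-(Matrix.single 2 3 (1 : F)))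
          + Z 0 2 • Matrix.single 1 3 (1 : F) := by
    intro Z hZ
    conv_lhs => rw [decomp_upper Z hZ]
    simp only [map_add, map_smul, hE12, hE13, hE14, hE23, hE24, hE34,
      smul_zero, add_zero]
  intro X Y hX hY
  have hX10 : X 1 0 = 0 := hX 1 0 (by decide)
  have hX20 : X 2 0 = 0 := hX 2 0 (by decide)
  have hX21 : X 2 1 = 0 := hX 2 1 (by decide)
  have hX30 : X 3 0 = 0 := hX 3 0 (by decide)
  have hX31 : X 3 1 = 0 := hX 3 1 (by decide)
  have hX32 : X 3 2 = 0 := hX 3 2 (by decide)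
  have hX00 : X 0 0 = 0 := hX 0 0 (by decide)
  have hX11 : X 1 1 = 0 := hX 1 1 (by decide)
  have hX22 : X 2 2 = 0 := hX 2 2 (by decide)
  have hX33 : X 3 3 = 0 := hX 3 3 (by decide)
  have hY10 : Y 1 0 = 0 := hY 1 0 (by decide)
  have hY20 : Y 2 0 = 0 := hY 2 0 (by decide)
  have hY21 : Y 2 1 = 0 := hY 2 1 (by decide)
  have hY30 : Y 3 0 = 0 := hY 3 0 (by decide)
  have hY31 : Y 3 1 = 0 := hY 3 1 (by decide)
  have hY32 : Y 3 2 = 0 := hY 3 2 (by decide)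
  have hY00 : Y 0 0 = 0 := hY 0 0 (by decide)
  have hY11 : Y 1 1 = 0 := hY 1 1 (by decide)
  have hY22 : Y 2 2 = 0 := hY 2 2 (by decide)
  have hY33 : Y 3 3 = 0 := hY 3 3 (by decide)
  rw [key _ (comm_upper X Y hX hY), key X hX, key Y hY]
  ext i j
  fin_cases i <;> fin_cases j <;>
    simp [Matrix.mul_apply, Fin.sum_univ_four, Matrix.single,
      hX00, hX10, hX11, hX20, hX21, hX22, hX30, hX31, hX32, hX33,
      hY00, hY10, hY11, hY20, hY21, hY22, hY30, hY31, hY32, hY33,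
      Fin.isValue] <;>
    first
    | ring1
    | (ring_nf; simp [h2])
end
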